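/- arXiv:2305.12023 — 4 statements merged into one kernel-verified Lean document; each statement's English description precedes it below -/
import Mathlib

section
/- For every integer k ≥ 1, if a symmetric n×n 0,1-matrix M admits a sequence of symmetric divisions each of which is k-diagonal, then stw(M) ≤ 4k³. -/
open Finset

noncomputable section
open scoped Classical
set_option linter.unusedSectionVars false
set_option linter.unusedVariables false

namespace StretchPaper

/-! ### Partitions, red graphs, component twin-width and stretch-width of graphs -/

variable {V : Type} [Fintype V] [DecidableEq V]

/-- Two parts are inhomogeneous in `G`. -/
def Inhomog (G : SimpleGraph V) (X Y : Finset V) : Prop :=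
  (∃ x ∈ X, ∃ y ∈ Y, G.Adj x y) ∧ (∃ x ∈ X, ∃ y ∈ Y, ¬ G.Adj x y)

lemma Inhomog.symm {G : SimpleGraph V} {X Y : Finset V} (h : Inhomog G X Y) :
    Inhomog G Y X := by
  obtain ⟨⟨x, hx, y, hy, hxy⟩, ⟨x', hx', y', hy', hxy'⟩⟩ := h
  exact ⟨⟨y, hy, x, hx, hxy.symm⟩, ⟨y', hy', x', hx', fun hc => hxy' hc.symm⟩⟩

/-- `P` is obtained from `Q` by merging two parts. -/
def MergeStep (Q P : Finpartition (Finset.univ : Finset V)) : Prop :=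
  ∃ A ∈ Q.parts, ∃ B ∈ Q.parts, A ≠ B ∧
    P.parts = insert (A ∪ B) ((Q.parts.erase A).erase B)

/-- `l = [P_n, …, P_1]` is a partition sequence: it starts at the partition into
singletons, ends at the partition with the single part `univ`, and each partition is
obtained from the previous one by merging two parts. -/
def IsPartitionSeq (l : List (Finpartition (Finset.univ : Finset V))) : Prop :=
  (∃ P, l.head? = some P ∧ ∀ X ∈ P.parts, X.card = 1) ∧
  (∃ P, l.getLast? = some P ∧ P.parts = {Finset.univ}) ∧
  l.Chain' MergeStep

/-- The red graph of a partition: parts are vertices, inhomogeneous pairs are edges. -/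
def redGraph (G : SimpleGraph V) (P : Finpartition (Finset.univ : Finset V)) :
    SimpleGraph {X : Finset V // X ∈ P.parts} where
  Adj X Y := X ≠ Y ∧ Inhomog G X.1 Y.1
  symm := ⟨fun X Y h => ⟨h.1.symm, h.2.symm⟩⟩
  loopless := ⟨fun X h => h.1 rfl⟩

/-- The largest number of parts contained in a single connected component of the red graph. -/
def maxRedComponentSize (G : SimpleGraph V) (P : Finpartition (Finset.univ : Finset V)) : ℕ :=
  Finset.univ.sup fun X : {X : Finset V // X ∈ P.parts} =>
    (Finset.univ.filter fun Y => (redGraph G P).Reachable X Y).card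

/-- Component twin-width. -/
def ctww (G : SimpleGraph V) : ℕ :=
  sInf { k | ∃ l, IsPartitionSeq l ∧ ∀ P ∈ l, maxRedComponentSize G P ≤ k }

section Ord
variable [LinearOrder V]

/-- The convex closure (span) of a set of vertices along the linear order. -/
def conv (X : Finset V) : Finset V :=
  Finset.univ.filter fun v => (∃ a ∈ X, a ≤ v) ∧ ∃ b ∈ X, v ≤ b

/-- Two sets are in conflict if their spans intersect. -/
def Conflict (X Y : Finset V) : Prop := (conv X ∩ conv Y).Nonempty

/-- The union of a part `X` and of all parts adjacent to `X` in the red graph. -/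
def redClosedNbhd (G : SimpleGraph V) (P : Finpartition (Finset.univ : Finset V))
    (X : Finset V) : Finset V :=
  X ∪ (P.parts.filter fun Y => Y ≠ X ∧ Inhomog G X Y).biUnion id

/-- The stretch of a part `X` of `P`: the number of parts `Y ≠ X` that conflict with the
union of `X` and all parts adjacent to `X` in the red graph (i.e. that interfere with `X`). -/
def stretchPart (G : SimpleGraph V) (P : Finpartition (Finset.univ : Finset V))
    (X : Finset V) : ℕ :=
  ((P.parts.erase X).filter fun Y => Conflict Y (redClosedNbhd G P X)).card

/-- The stretch of a partition: the maximum stretch of a part. -/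
def stretchPartition (G : SimpleGraph V) (P : Finpartition (Finset.univ : Finset V)) : ℕ :=
  P.parts.sup fun X => stretchPart G P X

/-- Stretch-width of the ordered graph `(G, ≤)`. -/
def stwOrd (G : SimpleGraph V) : ℕ :=
  sInf { k | ∃ l, IsPartitionSeq l ∧ ∀ P ∈ l, stretchPartition G P ≤ k }

end Ord

/-- Stretch-width of `G`: minimum over all linear orders on the vertices. -/
def stw (G : SimpleGraph V) : ℕ :=
  sInf (Set.range fun L : LinearOrder V => @stwOrd V _ _ L G)


/-! ### Symmetric 0,1-matrices: stretch-width and divisions -/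

variable {n : ℕ}

/-- The zone `R × C` of `M` is non-constant. -/
def NonConstZone (M : Fin n → Fin n → Bool) (R C : Finset (Fin n)) : Prop :=
  ∃ r ∈ R, ∃ r' ∈ R, ∃ c ∈ C, ∃ c' ∈ C, M r c ≠ M r' c'

/-- `D_R`: the union of `R` and of all parts `C` of `P` with `R × C` non-constant. -/
def matBag (M : Fin n → Fin n → Bool) (P : Finpartition (Finset.univ : Finset (Fin n)))
    (R : Finset (Fin n)) : Finset (Fin n) :=
  R ∪ (P.parts.filter fun C => NonConstZone M R C).biUnion id

/-- The stretch value of a part `R` of `P`. -/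
def matStretchPart (M : Fin n → Fin n → Bool) (P : Finpartition (Finset.univ : Finset (Fin n)))
    (R : Finset (Fin n)) : ℕ :=
  (P.parts.filter fun Q => Conflict Q (matBag M P R)).card

/-- The stretch value of a partition. -/
def matStretch (M : Fin n → Fin n → Bool)
    (P : Finpartition (Finset.univ : Finset (Fin n))) : ℕ :=
  P.parts.sup fun R => matStretchPart M P R

/-- Stretch-width of a symmetric 0,1-matrix. -/
def stwM (M : Fin n → Fin n → Bool) : ℕ :=
  sInf { k | ∃ l : List (Finpartition (Finset.univ : Finset (Fin n))),
    IsPartitionSeq l ∧ ∀ P ∈ l, matStretch M P ≤ k }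

/-- A symmetric division `(I_1, …, I_p)` of `[n]` into consecutive nonempty intervals;
out-of-range indices denote the empty set. -/
structure SymDiv (n : ℕ) where
  p : ℕ
  I : ℤ → Finset (Fin n)
  out_empty : ∀ j : ℤ, (j < 1 ∨ (p : ℤ) < j) → I j = ∅
  in_nonempty : ∀ j : ℤ, 1 ≤ j → j ≤ (p : ℤ) → (I j).Nonempty
  interval : ∀ j : ℤ, ∀ a ∈ I j, ∀ c ∈ I j, ∀ b : Fin n, a ≤ b → b ≤ c → b ∈ I j
  increasing : ∀ j : ℤ, ∀ a ∈ I j, ∀ b ∈ I (j + 1), a < b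
  covers : ∀ v : Fin n, ∃ j : ℤ, v ∈ I j

/-- The restriction of row `r` of `M` to the columns outside `U`. -/
def rowRestr (M : Fin n → Fin n → Bool) (U : Finset (Fin n)) (r : Fin n) :
    Fin n → Option Bool :=
  fun c => if c ∈ U then none else some (M r c)

/-- The union `I_j ∪ I_{j+1} ∪ … ∪ I_{j+k-1}`. -/
def window (D : SymDiv n) (j : ℤ) (k : ℕ) : Finset (Fin n) :=
  (Finset.Icc j (j + (k : ℤ) - 1)).biUnion D.I

/-- The part `I_i` of `D` is `k`-wide. -/
def WidePart (M : Fin n → Fin n → Bool) (D : SymDiv n) (k : ℕ) (i : ℤ) : Prop :=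
  ∀ j : ℤ, j ≤ i → i ≤ j + (k : ℤ) - 1 →
    k ≤ ((D.I i).image (rowRestr M (window D j k))).card

/-- The division `D` is `k`-wide. -/
def WideDiv (M : Fin n → Fin n → Bool) (D : SymDiv n) (k : ℕ) : Prop :=
  ∀ i : ℤ, 1 ≤ i → i ≤ (D.p : ℤ) → WidePart M D k i

/-- The division `D` is `k`-diagonal. -/
def DiagDiv (M : Fin n → Fin n → Bool) (D : SymDiv n) (k : ℕ) : Prop :=
  ∀ i : ℤ, 1 ≤ i → i ≤ (D.p : ℤ) → ¬ WidePart M D k i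

/-- `D` is obtained from `E` by merging two consecutive intervals. -/
def DivMerge (E D : SymDiv n) : Prop :=
  D.p + 1 = E.p ∧ ∃ m : ℤ, 1 ≤ m ∧ m < (E.p : ℤ) ∧
    (∀ j : ℤ, j < m → D.I j = E.I j) ∧
    D.I m = E.I m ∪ E.I (m + 1) ∧
    (∀ j : ℤ, m < j → D.I j = E.I (j + 1))

/-- `l = [D_n, …, D_1]` is a sequence of symmetric divisions: from the division into
`n` singletons to the division with one part, merging two consecutive intervals at each step. -/
def IsDivSeq (l : List (SymDiv n)) : Prop :=
  (∃ D, l.head? = some D ∧ D.p = n) ∧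
  (∃ D, l.getLast? = some D ∧ D.p = 1) ∧
  l.Chain' DivMerge


/-! ### Ordered graphs, crossing edges, overlap graphs -/

section Overlap
variable {α : Type} [LinearOrder α]

/-- The left (smaller) endpoint of an edge. -/
def eL (e : Sym2 α) : α := Sym2.lift ⟨fun a b => min a b, fun a b => min_comm a b⟩ e

/-- The right (larger) endpoint of an edge. -/
def eR (e : Sym2 α) : α := Sym2.lift ⟨fun a b => max a b, fun a b => max_comm a b⟩ e

/-- Two edges cross: `L(e) ≺ L(f) ≺ R(e) ≺ R(f)` or `L(f) ≺ L(e) ≺ R(f) ≺ R(e)`. -/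
def Cross (e f : Sym2 α) : Prop :=
  (eL e < eL f ∧ eL f < eR e ∧ eR e < eR f) ∨
  (eL f < eL e ∧ eL e < eR f ∧ eR f < eR e)

/-- The overlap graph of `(G, ≤)` has a `K_{t,t}` subgraph: two disjoint sets of `t` edges
of `G` each, such that every edge of one set crosses every edge of the other. -/
def OvHasKtt (G : SimpleGraph α) (t : ℕ) : Prop :=
  ∃ A B : Finset (Sym2 α), ↑A ⊆ G.edgeSet ∧ ↑B ⊆ G.edgeSet ∧ Disjoint A B ∧
    A.card = t ∧ B.card = t ∧ ∀ e ∈ A, ∀ f ∈ B, Cross e f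

variable [Fintype α]

/-- The interior of an edge: the vertices strictly between its endpoints. -/
def edgeInterior (e : Sym2 α) : Finset α :=
  Finset.univ.filter fun x => eL e < x ∧ x < eR e

/-- The length of an edge: the number of vertices `x` with `L(e) ≺ x ⪯ R(e)`. -/
def edgeLen (e : Sym2 α) : ℕ := (Finset.univ.filter fun x => eL e < x ∧ x ≤ eR e).card

/-- The maximum length of an edge of `S` (0 if `S` is empty). -/
def lenSup (S : Finset (Sym2 α)) : ℕ := S.sup edgeLen

/-- A rainbow: a set of edges of `G` whose interiors are pairwise nested. -/
def IsRainbow (G : SimpleGraph α) (S : Finset (Sym2 α)) : Prop :=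
  ↑S ⊆ G.edgeSet ∧
  ∀ e ∈ S, ∀ f ∈ S, edgeInterior e ⊆ edgeInterior f ∨ edgeInterior f ⊆ edgeInterior e

/-- A rainbow over the vertex `v`. -/
def IsRainbowOver (G : SimpleGraph α) (S : Finset (Sym2 α)) (v : α) : Prop :=
  IsRainbow G S ∧ ∀ e ∈ S, eL e < v ∧ v < eR e

/-- A maximum rainbow over `v`. -/
def IsMaxRainbowOver (G : SimpleGraph α) (S : Finset (Sym2 α)) (v : α) : Prop :=
  IsRainbowOver G S v ∧ ∀ S' : Finset (Sym2 α), IsRainbowOver G S' v → S'.card ≤ S.card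

end Overlap

/-! ### Balanced separators and tree-decompositions -/

section Sep
variable {V : Type} [Fintype V] [DecidableEq V]

/-- `C` is a `c`-balanced separator of `G`. -/
def IsBalancedSeparator (G : SimpleGraph V) (c : ℝ) (C : Finset V) : Prop :=
  ∃ A B : Finset V, Disjoint A B ∧ A ∪ B = Finset.univ \ C ∧
    (∀ a ∈ A, ∀ b ∈ B, ¬ G.Adj a b) ∧
    (A.card : ℝ) ≤ (1 - c) * (Fintype.card V) ∧
    (B.card : ℝ) ≤ (1 - c) * (Fintype.card V)

/-- `(T, β)` is a tree-decomposition of `G`. -/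
def IsTreeDecomp (G : SimpleGraph V) {m : ℕ} (T : SimpleGraph (Fin m))
    (β : Fin m → Finset V) : Prop :=
  T.Connected ∧ T.IsAcyclic ∧
  (∀ v : V, ∃ t, v ∈ β t) ∧
  (∀ u v : V, G.Adj u v → ∃ t, u ∈ β t ∧ v ∈ β t) ∧
  (∀ v : V, (T.induce {t | v ∈ β t}).Connected)

/-- Treewidth: the minimum width of a tree-decomposition of `G`. -/
def treewidth (G : SimpleGraph V) : ℕ :=
  sInf { k | ∃ (m : ℕ) (T : SimpleGraph (Fin m)) (β : Fin m → Finset V),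
    IsTreeDecomp G T β ∧ (Finset.univ.sup fun t => (β t).card) - 1 ≤ k }

end Sep


/-! ### Subdivisions -/

/-- The internal vertices of a walk (its support minus the two endpoints). -/
def walkInternal {W : Type} {H : SimpleGraph W} {a b : W} (p : H.Walk a b) : List W :=
  p.support.tail.dropLast

/-- `H` is obtained from `G` by subdividing every edge at least `s` times. -/
def IsSubdivisionGE {V W : Type} (G : SimpleGraph V) (H : SimpleGraph W) (s : ℕ) : Prop :=
  ∃ (φ : V ↪ W) (p : ∀ u v : V, G.Adj u v → H.Walk (φ u) (φ v)),
    (∀ u v huv, (p u v huv).IsPath) ∧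
    (∀ u v huv, s + 1 ≤ (p u v huv).length) ∧
    (∀ u v huv, p u v huv = (p v u huv.symm).reverse) ∧
    (∀ u v huv, ∀ x ∈ walkInternal (p u v huv), x ∉ Set.range φ) ∧
    (∀ u v huv, ∀ u' v' h', s(u, v) ≠ s(u', v') →
      ∀ x ∈ walkInternal (p u v huv), x ∉ walkInternal (p u' v' h')) ∧
    (∀ x : W, x ∈ Set.range φ ∨ ∃ u v huv, x ∈ walkInternal (p u v huv)) ∧
    (∀ e ∈ H.edgeSet, ∃ u v huv, e ∈ (p u v huv).edges)

/-- Subdividing the edge `uv` of `G` once: the new vertex is `none : Option V`. -/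
def subdivideOnce {V : Type} (G : SimpleGraph V) (u v : V) : SimpleGraph (Option V) where
  Adj x y :=
    match x, y with
    | some a, some b => G.Adj a b ∧ s(a, b) ≠ s(u, v)
    | some a, none => a = u ∨ a = v
    | none, some b => b = u ∨ b = v
    | none, none => False
  symm := by
    constructor
    rintro (_ | a) (_ | b) h
    · exact h
    · exact h
    · exact h
    · exact ⟨h.1.symm, by rw [Sym2.eq_swap]; exact h.2⟩
  loopless := by
    constructor
    rintro (_ | a) h
    · exact h
    · exact G.loopless.irrefl a h.1

/-! ### Flattening (iterated subdivisions) -/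

/-- The number of vertices strictly between `u` and `v`. -/
def interiorCount {V : Type} [Fintype V] [LinearOrder V] (u v : V) : ℕ :=
  (Finset.univ.filter fun x => u < x ∧ x < v).card

/-- The ordered graph `H` is obtained from `(G, ≤)` by flattening the edge `uv`, via the
order-embedding `φ` of old vertices and the new vertices `w 0, …, w h` interleaved with
the vertices between `u` and `v`. -/
def IsFlattenStepWith {V W : Type} [Fintype V] [LinearOrder V] [Fintype W] [LinearOrder W]
    (G : SimpleGraph V) (u v : V) (H : SimpleGraph W) (φ : V → W) (w : ℕ → W) : Prop :=
  G.Adj u v ∧ u < v ∧ StrictMono φ ∧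
  (∀ x : W, (∃ a : V, x = φ a) ∨ ∃ i ≤ interiorCount u v, x = w i) ∧
  (∀ a : V, ∀ i ≤ interiorCount u v, φ a ≠ w i) ∧
  (∀ i ≤ interiorCount u v,
    (Finset.univ.filter fun x => u ≤ x ∧ x ≤ v ∧ φ x < w i).card = i + 1) ∧
  (∀ a b : W, H.Adj a b ↔
    ((∃ x y : V, G.Adj x y ∧ s(x, y) ≠ s(u, v) ∧ s(a, b) = s(φ x, φ y)) ∨
     s(a, b) = s(φ u, w 0) ∨
     (∃ i : ℕ, i + 1 ≤ interiorCount u v ∧ s(a, b) = s(w i, w (i + 1))) ∨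
     s(a, b) = s(w (interiorCount u v), φ v)))

/-! ### The graphs `A_3^h` -/

/-- The graph `A_3^h` on vertex set `{0, …, 3^h − 1}`: distinct `u, v` are adjacent iff
`|⌊u/3^l⌋ − ⌊v/3^l⌋| = 3` for some `l < h`. -/
def Agraph (h : ℕ) : SimpleGraph (Fin (3 ^ h)) where
  Adj u v := u ≠ v ∧ ∃ l < h,
    ((u : ℕ) / 3 ^ l = (v : ℕ) / 3 ^ l + 3 ∨ (v : ℕ) / 3 ^ l = (u : ℕ) / 3 ^ l + 3)
  symm := by
    constructor
    rintro u v ⟨hne, l, hl, hd⟩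
    exact ⟨hne.symm, l, hl, hd.symm⟩
  loopless := ⟨fun u h => h.1 rfl⟩




/-! ### Auxiliary development for the diagonal-division theorem -/

section DiagProofAux

variable {n : ℕ}

lemma SymDiv.mem_bounds (D : SymDiv n) {j : ℤ} {a : Fin n} (ha : a ∈ D.I j) :
    1 ≤ j ∧ j ≤ (D.p : ℤ) := by
  by_contra hc
  have : D.I j = ∅ := D.out_empty j (by omega)
  simp [this] at ha

lemma SymDiv.lt_of_idx_lt (D : SymDiv n) {j j' : ℤ} (hjj : j < j') {a b : Fin n}
    (ha : a ∈ D.I j) (hb : b ∈ D.I j') : a < b := by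
  have key : ∀ j' : ℤ, j + 1 ≤ j' → ∀ b ∈ D.I j', a < b := by
    intro j' hj'
    refine Int.le_induction (motive := fun t _ => ∀ b ∈ D.I t, a < b) ?_ ?_ j' hj'
    · exact fun b hb => D.increasing j a ha b hb
    · intro m hm IH b hb
      have h1 : 1 ≤ m := by have := D.mem_bounds ha; omega
      have h2 : m ≤ (D.p : ℤ) := by have := D.mem_bounds hb; omega
      obtain ⟨c, hc⟩ := D.in_nonempty m h1 h2
      exact (IH c hc).trans (D.increasing m c hc b hb)
  exact key j' (by omega) b hb

lemma SymDiv.idx_unique (D : SymDiv n) {j j' : ℤ} {a : Fin n}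
    (ha : a ∈ D.I j) (ha' : a ∈ D.I j') : j = j' := by
  by_contra hne
  rcases lt_or_gt_of_ne hne with h | h
  · exact absurd (D.lt_of_idx_lt h ha ha') (lt_irrefl a)
  · exact absurd (D.lt_of_idx_lt h ha' ha) (lt_irrefl a)

/-- The index of the interval of `D` containing `r`. -/
noncomputable def SymDiv.idx (D : SymDiv n) (r : Fin n) : ℤ := Classical.choose (D.covers r)

lemma SymDiv.mem_idx (D : SymDiv n) (r : Fin n) : r ∈ D.I (D.idx r) :=
  Classical.choose_spec (D.covers r)

lemma SymDiv.idx_eq (D : SymDiv n) {j : ℤ} {r : Fin n} (h : r ∈ D.I j) : D.idx r = j :=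
  D.idx_unique (D.mem_idx r) h

/-- The "big window" of width `2k-1` centered at interval `i`. -/
def BW (D : SymDiv n) (k : ℕ) (i : ℤ) : Finset (Fin n) :=
  (Finset.Icc (i - (k : ℤ) + 1) (i + (k : ℤ) - 1)).biUnion D.I

end DiagProofAux


section DiagProofAux2

variable {n k : ℕ} {M : Fin n → Fin n → Bool}

lemma conv_mono {X Y : Finset (Fin n)} (h : X ⊆ Y) : conv X ⊆ conv Y := by
  intro v hv
  simp only [conv, mem_filter, mem_univ, true_and] at hv ⊢
  obtain ⟨⟨a, ha, hav⟩, ⟨b, hb, hvb⟩⟩ := hv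
  exact ⟨⟨a, h ha, hav⟩, ⟨b, h hb, hvb⟩⟩

lemma conv_subset_of_subset_I (D : SymDiv n) {Q : Finset (Fin n)} {q : ℤ} (h : Q ⊆ D.I q) :
    conv Q ⊆ D.I q := by
  intro v hv
  simp only [conv, mem_filter, mem_univ, true_and] at hv
  obtain ⟨⟨a, ha, hav⟩, ⟨b, hb, hvb⟩⟩ := hv
  exact D.interval q a (h ha) b (h hb) v hav hvb

lemma conv_BW_subset (D : SymDiv n) (i : ℤ) : conv (BW D k i) ⊆ BW D k i := by
  intro v hv
  simp only [conv, mem_filter, mem_univ, true_and] at hv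
  obtain ⟨⟨a, ha, hav⟩, ⟨b, hb, hvb⟩⟩ := hv
  simp only [BW, mem_biUnion, mem_Icc] at ha hb ⊢
  obtain ⟨ja, hja, haj⟩ := ha
  obtain ⟨jb, hjb, hbj⟩ := hb
  refine ⟨D.idx v, ?_, D.mem_idx v⟩
  have h1 : ja ≤ D.idx v := by
    by_contra hcon
    exact absurd hav (not_le.mpr (D.lt_of_idx_lt (by omega) (D.mem_idx v) haj))
  have h2 : D.idx v ≤ jb := by
    by_contra hcon
    exact absurd hvb (not_le.mpr (D.lt_of_idx_lt (by omega) hbj (D.mem_idx v)))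
  omega

lemma not_mem_BW (D : SymDiv n) {i i' : ℤ} (h : i' < i - (k : ℤ) + 1 ∨ i + (k : ℤ) - 1 < i')
    {c : Fin n} (hc : c ∈ D.I i') : c ∉ BW D k i := by
  intro hmem
  simp only [BW, mem_biUnion, mem_Icc] at hmem
  obtain ⟨t, ht, hct⟩ := hmem
  have := D.idx_unique hc hct
  omega

lemma rowRestr_eq_mono {U U' : Finset (Fin n)} (hU : U ⊆ U') {r s : Fin n}
    (h : rowRestr M U r = rowRestr M U s) : rowRestr M U' r = rowRestr M U' s := by
  funext c
  by_cases hc : c ∈ U'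
  · simp [rowRestr, hc]
  · have hcU : c ∉ U := fun hx => hc (hU hx)
    have h2 := congrFun h c
    simp only [rowRestr, if_neg hc, if_neg hcU] at h2 ⊢
    exact h2

lemma value_eq_of_rowRestr_eq {U : Finset (Fin n)} {r s : Fin n}
    (h : rowRestr M U r = rowRestr M U s) {c : Fin n} (hc : c ∉ U) : M r c = M s c := by
  have h2 := congrFun h c
  simp only [rowRestr, if_neg hc, Option.some.injEq] at h2
  exact h2

lemma rowRestr_card_mono (S : Finset (Fin n)) {U U' : Finset (Fin n)} (hU : U ⊆ U') :
    (S.image (rowRestr M U')).card ≤ (S.image (rowRestr M U)).card := by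
  have himg : S.image (rowRestr M U') =
      (S.image (rowRestr M U)).image (fun p c => if c ∈ U' then none else p c) := by
    rw [Finset.image_image]
    apply Finset.image_congr
    intro r _
    funext c
    by_cases hc : c ∈ U'
    · simp [rowRestr, hc]
    · have hcU : c ∉ U := fun hx => hc (hU hx)
      simp [rowRestr, hc, hcU]
  rw [himg]
  exact Finset.card_image_le

lemma diag_card {D : SymDiv n} (hdiag : DiagDiv M D k) (i : ℤ) :
    ((D.I i).image (rowRestr M (BW D k i))).card ≤ k - 1 := by
  by_cases hi : 1 ≤ i ∧ i ≤ (D.p : ℤ)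
  · have hw := hdiag i hi.1 hi.2
    rw [WidePart] at hw
    push_neg at hw
    obtain ⟨j, hj1, hj2, hcard⟩ := hw
    have hsub : window D j k ⊆ BW D k i := by
      apply Finset.biUnion_subset_biUnion_of_subset_left
      intro t ht
      simp only [mem_Icc] at ht ⊢
      omega
    have hmono := rowRestr_card_mono (M := M) (D.I i) hsub
    omega
  · have hempty : D.I i = ∅ := D.out_empty i (by omega)
    simp [hempty]

end DiagProofAux2


section DiagProofAux3

variable {n k : ℕ} {M : Fin n → Fin n → Bool}

/-- Rows in the same interval with the same pattern outside the big window. -/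
def divSetoid (M : Fin n → Fin n → Bool) (k : ℕ) (D : SymDiv n) : Setoid (Fin n) where
  r a b := D.idx a = D.idx b ∧
    rowRestr M (BW D k (D.idx a)) a = rowRestr M (BW D k (D.idx a)) b
  iseqv := by
    constructor
    · exact fun a => ⟨rfl, rfl⟩
    · rintro a b ⟨h1, h2⟩
      refine ⟨h1.symm, ?_⟩
      rw [← h1]
      exact h2.symm
    · rintro a b c ⟨h1, h2⟩ ⟨h3, h4⟩
      refine ⟨h1.trans h3, h2.trans ?_⟩
      rw [h1]
      exact h4

/-- The partition induced by `divSetoid`. -/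
noncomputable def divPart (M : Fin n → Fin n → Bool) (k : ℕ) (D : SymDiv n) :
    Finpartition (Finset.univ : Finset (Fin n)) :=
  Finpartition.ofSetoid (divSetoid M k D)

lemma mem_divPart_parts_iff {D : SymDiv n} {X : Finset (Fin n)} :
    X ∈ (divPart M k D).parts ↔
      ∃ a, X = Finset.univ.filter (fun b => (divSetoid M k D).r a b) := by
  simp only [divPart, Finpartition.ofSetoid, Finpartition.ofSetSetoid_parts, Finset.mem_image, mem_univ, true_and]
  constructor
  · rintro ⟨a, rfl⟩
    exact ⟨a, rfl⟩
  · rintro ⟨a, rfl⟩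
    exact ⟨a, rfl⟩

lemma class_mem_divPart_parts (D : SymDiv n) (a : Fin n) :
    (Finset.univ.filter (fun b => (divSetoid M k D).r a b)) ∈ (divPart M k D).parts :=
  mem_divPart_parts_iff.mpr ⟨a, rfl⟩

lemma divPart_rel_of_mem_part {D : SymDiv n} {X : Finset (Fin n)}
    (hX : X ∈ (divPart M k D).parts) {r s : Fin n} (hr : r ∈ X) (hs : s ∈ X) :
    (divSetoid M k D).r r s := by
  obtain ⟨a, rfl⟩ := mem_divPart_parts_iff.mp hX
  simp only [Finset.mem_filter, mem_univ, true_and] at hr hs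
  exact (divSetoid M k D).trans ((divSetoid M k D).symm hr) hs

section MergeFacts

variable {E D : SymDiv n} {m : ℤ}
variable (hm1 : ∀ j : ℤ, j < m → D.I j = E.I j)
variable (hm2 : D.I m = E.I m ∪ E.I (m + 1))
variable (hm3 : ∀ j : ℤ, m < j → D.I j = E.I (j + 1))

include hm1 hm2 hm3 in
lemma merge_I_subset (j : ℤ) : E.I j ⊆ D.I (if j ≤ m then j else j - 1) := by
  rcases lt_trichotomy j m with h | h | h
  · rw [if_pos h.le, hm1 j h]
  · subst h
    rw [if_pos le_rfl, hm2]
    exact Finset.subset_union_left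
  · rw [if_neg (by omega)]
    rcases eq_or_lt_of_le (by omega : m + 1 ≤ j) with h' | h'
    · rw [show j - 1 = m by omega, hm2, ← h']
      exact Finset.subset_union_right
    · rw [hm3 (j - 1) (by omega), show j - 1 + 1 = j by omega]

include hm1 hm2 hm3 in
lemma merge_BW_subset (i : ℤ) : BW E k i ⊆ BW D k (if i ≤ m then i else i - 1) := by
  intro x hx
  simp only [BW, mem_biUnion, mem_Icc] at hx ⊢
  obtain ⟨j, hj, hxj⟩ := hx
  refine ⟨if j ≤ m then j else j - 1, ?_, merge_I_subset hm1 hm2 hm3 j hxj⟩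
  split_ifs <;> omega

include hm1 hm2 hm3 in
lemma merge_idx (r : Fin n) : D.idx r = if E.idx r ≤ m then E.idx r else E.idx r - 1 :=
  D.idx_eq (merge_I_subset hm1 hm2 hm3 (E.idx r) (E.mem_idx r))

include hm1 hm2 hm3 in
lemma merge_idx_cases {q : ℤ} {r : Fin n} (hr : r ∈ D.I q) :
    E.idx r = q ∨ E.idx r = q + 1 := by
  have h1 : D.idx r = q := D.idx_eq hr
  have h2 := merge_idx hm1 hm2 hm3 r
  split_ifs at h2 <;> omega

include hm1 hm2 hm3 in
lemma merge_rel {a b : Fin n} (h : (divSetoid M k E).r a b) : (divSetoid M k D).r a b := by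
  obtain ⟨h1, h2⟩ := h
  have hia := merge_idx hm1 hm2 hm3 (D := D) a
  have hib := merge_idx hm1 hm2 hm3 (D := D) b
  constructor
  · rw [hia, hib, h1]
  · rw [hia]
    exact rowRestr_eq_mono (merge_BW_subset hm1 hm2 hm3 (E.idx a)) h2

include hm1 hm2 hm3 in
lemma divPart_le_of_merge : divPart M k E ≤ divPart M k D := by
  intro X hX
  obtain ⟨a, rfl⟩ := mem_divPart_parts_iff.mp hX
  refine ⟨Finset.univ.filter (fun b => (divSetoid M k D).r a b),
    class_mem_divPart_parts D a, ?_⟩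
  intro b hb
  simp only [Finset.mem_filter, mem_univ, true_and] at hb ⊢
  exact merge_rel hm1 hm2 hm3 hb

end MergeFacts

end DiagProofAux3


section ChainAux

variable {n : ℕ}

/-- Merging two parts of a finpartition of `univ`. -/
noncomputable def mergeParts (P : Finpartition (Finset.univ : Finset (Fin n)))
    (X Y : Finset (Fin n)) (hX : X ∈ P.parts) (hY : Y ∈ P.parts) (hXY : X ≠ Y) :
    Finpartition (Finset.univ : Finset (Fin n)) where
  parts := insert (X ∪ Y) ((P.parts.erase X).erase Y)
  supIndep := by
    rw [Finset.supIndep_iff_pairwiseDisjoint]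
    intro a ha b hb hab
    simp only [Function.onFun, id_eq]
    simp only [Finset.coe_insert, Set.mem_insert_iff, Finset.mem_coe, Finset.mem_erase] at ha hb
    rcases ha with rfl | ⟨haY, haX, ha⟩
    · rcases hb with rfl | ⟨hbY, hbX, hb⟩
      · exact absurd rfl hab
      · rw [Finset.disjoint_union_left]
        exact ⟨P.disjoint hX hb (fun e => hbX e.symm), P.disjoint hY hb (fun e => hbY e.symm)⟩
    · rcases hb with rfl | ⟨hbY, hbX, hb⟩
      · rw [Finset.disjoint_union_right]
        exact ⟨P.disjoint ha hX haX, P.disjoint ha hY haY⟩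
      · exact P.disjoint ha hb hab
  sup_parts := by
    apply Finset.Subset.antisymm
    · rw [← Finset.le_iff_subset]
      apply Finset.sup_le
      intro Z _
      exact Finset.le_iff_subset.mpr (Finset.subset_univ Z)
    · intro v _
      obtain ⟨Z, hZ, hvZ⟩ := P.exists_mem (Finset.mem_univ v)
      rw [Finset.mem_sup]
      by_cases hZX : Z = X
      · exact ⟨X ∪ Y, Finset.mem_insert_self _ _, Finset.mem_union_left _ (hZX ▸ hvZ)⟩
      · by_cases hZY : Z = Y
        · exact ⟨X ∪ Y, Finset.mem_insert_self _ _, Finset.mem_union_right _ (hZY ▸ hvZ)⟩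
        · exact ⟨Z, Finset.mem_insert_of_mem
            (Finset.mem_erase.mpr ⟨hZY, Finset.mem_erase.mpr ⟨hZX, hZ⟩⟩), hvZ⟩
  bot_notMem := by
    simp only [Finset.bot_eq_empty, Finset.mem_insert, Finset.mem_erase]
    rintro (h | ⟨-, -, h⟩)
    · obtain ⟨x, hx⟩ := P.nonempty_of_mem_parts hX
      have : x ∈ (∅ : Finset (Fin n)) := h ▸ Finset.mem_union_left _ hx
      simp at this
    · exact P.bot_notMem h

lemma mergeStep_mergeParts (P : Finpartition (Finset.univ : Finset (Fin n)))
    {X Y : Finset (Fin n)} (hX : X ∈ P.parts) (hY : Y ∈ P.parts) (hXY : X ≠ Y) :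
    MergeStep P (mergeParts P X Y hX hY hXY) :=
  ⟨X, hX, Y, hY, hXY, rfl⟩

lemma le_mergeParts (P : Finpartition (Finset.univ : Finset (Fin n)))
    {X Y : Finset (Fin n)} (hX : X ∈ P.parts) (hY : Y ∈ P.parts) (hXY : X ≠ Y) :
    P ≤ mergeParts P X Y hX hY hXY := by
  intro Z hZ
  by_cases hZX : Z = X
  · exact ⟨X ∪ Y, Finset.mem_insert_self _ _, hZX ▸ Finset.subset_union_left⟩
  · by_cases hZY : Z = Y
    · exact ⟨X ∪ Y, Finset.mem_insert_self _ _, hZY ▸ Finset.subset_union_right⟩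
    · exact ⟨Z, Finset.mem_insert_of_mem
        (Finset.mem_erase.mpr ⟨hZY, Finset.mem_erase.mpr ⟨hZX, hZ⟩⟩), Finset.Subset.refl Z⟩

lemma mergeParts_le (P Q : Finpartition (Finset.univ : Finset (Fin n)))
    {X Y Z : Finset (Fin n)} (hX : X ∈ P.parts) (hY : Y ∈ P.parts) (hXY : X ≠ Y)
    (hPQ : P ≤ Q) (hZ : Z ∈ Q.parts) (hXZ : X ⊆ Z) (hYZ : Y ⊆ Z) :
    mergeParts P X Y hX hY hXY ≤ Q := by
  intro W hW
  rcases Finset.mem_insert.mp hW with rfl | hW'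
  · exact ⟨Z, hZ, Finset.union_subset hXZ hYZ⟩
  · exact hPQ (Finset.mem_of_mem_erase (Finset.mem_of_mem_erase hW'))

lemma mergeParts_card_lt (P : Finpartition (Finset.univ : Finset (Fin n)))
    {X Y : Finset (Fin n)} (hX : X ∈ P.parts) (hY : Y ∈ P.parts) (hXY : X ≠ Y) :
    (mergeParts P X Y hX hY hXY).parts.card < P.parts.card := by
  have hnotmem : X ∪ Y ∉ (P.parts.erase X).erase Y := by
    intro hmem
    have hmem' : X ∪ Y ∈ P.parts := Finset.mem_of_mem_erase (Finset.mem_of_mem_erase hmem)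
    obtain ⟨x, hx⟩ := P.nonempty_of_mem_parts hX
    have : X ∪ Y = X := P.eq_of_mem_parts hmem' hX (Finset.mem_union_left _ hx) hx
    exact (Finset.mem_erase.mp (Finset.mem_of_mem_erase hmem)).1 (by
      rw [this])
  have hYX : Y ∈ P.parts.erase X := Finset.mem_erase.mpr ⟨fun e => hXY e.symm, hY⟩
  have hcard : ((P.parts.erase X).erase Y).card = P.parts.card - 2 := by
    rw [Finset.card_erase_of_mem hYX, Finset.card_erase_of_mem hX]
    omega
  have h2 : 1 < P.parts.card := Finset.one_lt_card.mpr ⟨X, hX, Y, hY, hXY⟩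
  show (insert (X ∪ Y) ((P.parts.erase X).erase Y)).card < P.parts.card
  rw [Finset.card_insert_of_notMem hnotmem, hcard]
  omega

lemma exists_mergeable {P Q : Finpartition (Finset.univ : Finset (Fin n))}
    (hPQ : P ≤ Q) (hne : P ≠ Q) :
    ∃ X ∈ P.parts, ∃ Y ∈ P.parts, X ≠ Y ∧ ∃ Z ∈ Q.parts, X ⊆ Z ∧ Y ⊆ Z := by
  by_contra hcon
  push_neg at hcon
  apply hne
  have key : ∀ X ∈ P.parts, ∀ Z ∈ Q.parts, ∀ x, x ∈ X → x ∈ Z → X = Z := by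
    intro X hX Z hZ x hxX hxZ
    obtain ⟨Z', hZ', hXZ'⟩ := hPQ hX
    have hZZ : Z' = Z := Q.eq_of_mem_parts hZ' hZ (hXZ' hxX) hxZ
    subst hZZ
    apply Finset.Subset.antisymm hXZ'
    intro z hz
    obtain ⟨W, hW, hzW⟩ := P.exists_mem (Finset.mem_univ z)
    obtain ⟨Z'', hZ'', hWZ''⟩ := hPQ hW
    have hZeq : Z'' = Z' := Q.eq_of_mem_parts hZ'' hZ' (hWZ'' hzW) hz
    subst hZeq
    have hWX : W = X := by
      by_contra hne'
      exact hcon X hX W hW (fun e => hne' e.symm) Z'' hZ'' hXZ' hWZ''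
    rw [← hWX]
    exact hzW
  apply Finpartition.ext
  ext W
  constructor
  · intro hW
    obtain ⟨x, hx⟩ := P.nonempty_of_mem_parts hW
    obtain ⟨Z, hZ, hxZ⟩ := Q.exists_mem (Finset.mem_univ x)
    rw [key W hW Z hZ x hx hxZ]
    exact hZ
  · intro hW
    obtain ⟨x, hx⟩ := Q.nonempty_of_mem_parts hW
    obtain ⟨X, hX, hxX⟩ := P.exists_mem (Finset.mem_univ x)
    rw [← key X hX W hW x hxX hx]
    exact hX

lemma exists_mergeChain (N : ℕ) :
    ∀ P Q : Finpartition (Finset.univ : Finset (Fin n)), P.parts.card ≤ N → P ≤ Q →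
    ∃ c : List (Finpartition (Finset.univ : Finset (Fin n))),
      c ≠ [] ∧ c.head? = some P ∧ c.getLast? = some Q ∧ c.Chain' MergeStep ∧
      ∀ R ∈ c, P ≤ R ∧ R ≤ Q := by
  induction N with
  | zero =>
    intro P Q hcard hPQ
    by_cases hPQeq : P = Q
    · subst hPQeq
      exact ⟨[P], by simp, by simp, by simp, List.isChain_singleton _, by simp⟩
    · obtain ⟨X, hX, -⟩ := exists_mergeable hPQ hPQeq
      rw [Nat.le_zero, Finset.card_eq_zero] at hcard
      rw [hcard] at hX
      simp at hX
  | succ N IH =>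
    intro P Q hcard hPQ
    by_cases hPQeq : P = Q
    · subst hPQeq
      exact ⟨[P], by simp, by simp, by simp, List.isChain_singleton _, by simp⟩
    · obtain ⟨X, hX, Y, hY, hXY, Z, hZ, hXZ, hYZ⟩ := exists_mergeable hPQ hPQeq
      have hcard' : (mergeParts P X Y hX hY hXY).parts.card ≤ N := by
        have := mergeParts_card_lt P hX hY hXY
        omega
      obtain ⟨c, hne, hhead, hlast, hchain, hbetween⟩ :=
        IH (mergeParts P X Y hX hY hXY) Q hcard' (mergeParts_le P Q hX hY hXY hPQ hZ hXZ hYZ)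
      obtain ⟨c0, c', rfl⟩ := List.exists_cons_of_ne_nil hne
      have hc0 : c0 = mergeParts P X Y hX hY hXY := by
        simp only [List.head?_cons, Option.some.injEq] at hhead
        exact hhead
      refine ⟨P :: c0 :: c', by simp, by simp, ?_, ?_, ?_⟩
      · rw [List.getLast?_cons_cons]
        exact hlast
      · refine List.isChain_cons_cons.mpr ⟨?_, hchain⟩
        rw [hc0]
        exact mergeStep_mergeParts P hX hY hXY
      · intro R hR
        rcases List.mem_cons.mp hR with rfl | hR'
        · exact ⟨le_refl R, hPQ⟩
        · obtain ⟨h1, h2⟩ := hbetween R hR'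
          exact ⟨(le_mergeParts P hX hY hXY).trans h1, h2⟩

end ChainAux


section StretchBound

variable {n k : ℕ} {M : Fin n → Fin n → Bool}

lemma stretch_bound (hk : 1 ≤ k) (hM : ∀ i j, M i j = M j i) (D : SymDiv n)
    (P : Finpartition (Finset.univ : Finset (Fin n)))
    (hpart : ∀ X ∈ P.parts, ∀ r ∈ X, ∀ s ∈ X, (divSetoid M k D).r r s)
    (hcount : ∀ q : ℤ, (P.parts.filter (fun X => X ⊆ D.I q)).card ≤ 2 * k) :
    matStretch M P ≤ 4 * k ^ 3 := by
  have hsub : ∀ X ∈ P.parts, ∀ x ∈ X, X ⊆ D.I (D.idx x) := by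
    intro X hX x hx y hy
    have hrel := hpart X hX x hx y hy
    rw [hrel.1]
    exact D.mem_idx y
  rw [matStretch]
  apply Finset.sup_le
  intro R hR
  obtain ⟨r₀, hr₀⟩ := P.nonempty_of_mem_parts hR
  set i := D.idx r₀ with hi
  have hRsub : R ⊆ D.I i := hsub R hR r₀ hr₀
  -- every row of `R` has pattern outside `BW D k i` equal to that of `r₀`
  have hRpat : ∀ r ∈ R, ∀ r' ∈ R,
      rowRestr M (BW D k i) r = rowRestr M (BW D k i) r' := by
    intro r hr r' hr'
    obtain ⟨h0a, -⟩ := hpart R hR r₀ hr₀ r hr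
    obtain ⟨-, h1b⟩ := hpart R hR r hr r' hr'
    rw [← h0a] at h1b
    exact h1b
  -- Step A: the bag is inside the big window
  have hbag : matBag M P R ⊆ BW D k i := by
    intro v hv
    rw [matBag, Finset.mem_union] at hv
    rcases hv with hv | hv
    · have hvI : v ∈ D.I i := hRsub hv
      simp only [BW, Finset.mem_biUnion, Finset.mem_Icc]
      exact ⟨i, by omega, hvI⟩
    · rw [Finset.mem_biUnion] at hv
      obtain ⟨C, hC, hvC⟩ := hv
      rw [Finset.mem_filter] at hC
      obtain ⟨hCparts, hCzone⟩ := hC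
      obtain ⟨c₀, hc₀⟩ := P.nonempty_of_mem_parts hCparts
      set i' := D.idx c₀ with hi'
      have hCsub : C ⊆ D.I i' := hsub C hCparts c₀ hc₀
      by_cases hwin : i - (k : ℤ) + 1 ≤ i' ∧ i' ≤ i + (k : ℤ) - 1
      · simp only [BW, Finset.mem_biUnion, Finset.mem_Icc]
        exact ⟨i', hwin, hCsub hvC⟩
      · exfalso
        have hfar : i' < i - (k : ℤ) + 1 ∨ i + (k : ℤ) - 1 < i' := by omega
        have hfar' : i < i' - (k : ℤ) + 1 ∨ i' + (k : ℤ) - 1 < i := by omega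
        have hCpat : ∀ c ∈ C, ∀ c' ∈ C,
            rowRestr M (BW D k i') c = rowRestr M (BW D k i') c' := by
          intro c hc c' hc'
          obtain ⟨h0a, -⟩ := hpart C hCparts c₀ hc₀ c hc
          obtain ⟨-, h1b⟩ := hpart C hCparts c hc c' hc'
          rw [← h0a] at h1b
          exact h1b
        obtain ⟨r, hrR, r', hr'R, c, hcC, c', hc'C, hne⟩ := hCzone
        have hcBW : c ∉ BW D k i := not_mem_BW D hfar (hCsub hcC)
        have hr'BW : r' ∉ BW D k i' := not_mem_BW D hfar' (hRsub hr'R)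
        have h1 : M r c = M r' c := value_eq_of_rowRestr_eq (hRpat r hrR r' hr'R) hcBW
        have h2 : M c r' = M c' r' := value_eq_of_rowRestr_eq (hCpat c hcC c' hc'C) hr'BW
        have h3 : M r' c = M r' c' := by
          rw [hM r' c, h2, ← hM r' c']
        exact hne (h1.trans h3)
  -- Step B: conflicts stay in the big window
  have hconv : conv (matBag M P R) ⊆ BW D k i := (conv_mono hbag).trans (conv_BW_subset D i)
  rw [matStretchPart]
  have hsubset : P.parts.filter (fun Q => Conflict Q (matBag M P R)) ⊆
      (Finset.Icc (i - (k : ℤ) + 1) (i + (k : ℤ) - 1)).biUnion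
        (fun q => P.parts.filter (fun X => X ⊆ D.I q)) := by
    intro Q hQ
    rw [Finset.mem_filter] at hQ
    obtain ⟨hQp, hQc⟩ := hQ
    obtain ⟨v, hv⟩ := hQc
    rw [Finset.mem_inter] at hv
    obtain ⟨x₀, hx₀⟩ := P.nonempty_of_mem_parts hQp
    have hQsub : Q ⊆ D.I (D.idx x₀) := hsub Q hQp x₀ hx₀
    have hv1 : v ∈ D.I (D.idx x₀) := conv_subset_of_subset_I D hQsub hv.1
    have hv2 : v ∈ BW D k i := hconv hv.2
    simp only [BW, Finset.mem_biUnion, Finset.mem_Icc] at hv2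
    obtain ⟨t, ht, hvt⟩ := hv2
    have hteq : D.idx x₀ = t := D.idx_unique hv1 hvt
    exact Finset.mem_biUnion.mpr ⟨t, Finset.mem_Icc.mpr ht,
      Finset.mem_filter.mpr ⟨hQp, hteq ▸ hQsub⟩⟩
  have hIcc : (Finset.Icc (i - (k : ℤ) + 1) (i + (k : ℤ) - 1)).card ≤ 2 * k := by
    rw [Int.card_Icc]
    omega
  calc (P.parts.filter (fun Q => Conflict Q (matBag M P R))).card
      ≤ ((Finset.Icc (i - (k : ℤ) + 1) (i + (k : ℤ) - 1)).biUnion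
        (fun q => P.parts.filter (fun X => X ⊆ D.I q))).card := Finset.card_le_card hsubset
    _ ≤ ∑ q ∈ Finset.Icc (i - (k : ℤ) + 1) (i + (k : ℤ) - 1),
        (P.parts.filter (fun X => X ⊆ D.I q)).card := Finset.card_biUnion_le
    _ ≤ ∑ _q ∈ Finset.Icc (i - (k : ℤ) + 1) (i + (k : ℤ) - 1), 2 * k :=
        Finset.sum_le_sum (fun q _ => hcount q)
    _ = (Finset.Icc (i - (k : ℤ) + 1) (i + (k : ℤ) - 1)).card * (2 * k) := by
        rw [Finset.sum_const, smul_eq_mul]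
    _ ≤ (2 * k) * (2 * k) := Nat.mul_le_mul_right _ hIcc
    _ ≤ 4 * k ^ 3 := by nlinarith [hk]

end StretchBound


section CountBound

variable {n k : ℕ} {M : Fin n → Fin n → Bool}

lemma count_bound (E : SymDiv n) (hdiagE : DiagDiv M E k)
    (P : Finpartition (Finset.univ : Finset (Fin n)))
    (hEP : divPart M k E ≤ P) (J : Finset (Fin n)) (q : ℤ)
    (hJ : ∀ r ∈ J, E.idx r = q ∨ E.idx r = q + 1) :
    (P.parts.filter (fun X => X ⊆ J)).card ≤ 2 * k := by
  set T : Finset (ℤ × (Fin n → Option Bool)) :=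
    (Finset.Icc q (q + 1)).biUnion
      (fun i' => ((E.I i').image (rowRestr M (BW E k i'))).image (fun pat => (i', pat))) with hT
  set f : Finset (Fin n) → ℤ × (Fin n → Option Bool) :=
    fun X => if h : X.Nonempty
      then (E.idx h.choose, rowRestr M (BW E k (E.idx h.choose)) h.choose)
      else (0, fun _ => none) with hf
  have hcard : (P.parts.filter (fun X => X ⊆ J)).card ≤ T.card := by
    apply Finset.card_le_card_of_injOn f
    · intro X hX
      simp only [Finset.mem_coe, Finset.mem_filter] at hX ⊢
      have hXne : X.Nonempty := P.nonempty_of_mem_parts hX.1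
      have hfX : f X = (E.idx hXne.choose,
          rowRestr M (BW E k (E.idx hXne.choose)) hXne.choose) := by
        rw [hf]
        exact dif_pos hXne
      rw [hfX]
      have hxX : hXne.choose ∈ X := hXne.choose_spec
      have hxJ : hXne.choose ∈ J := hX.2 hxX
      have hidx := hJ _ hxJ
      refine Finset.mem_biUnion.mpr ⟨E.idx hXne.choose, Finset.mem_Icc.mpr (by omega), ?_⟩
      exact Finset.mem_image.mpr ⟨rowRestr M (BW E k (E.idx hXne.choose)) hXne.choose,
        Finset.mem_image.mpr ⟨hXne.choose, E.mem_idx hXne.choose, rfl⟩, rfl⟩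
    · intro X hX X' hX' hff
      simp only [Finset.coe_filter, Set.mem_setOf_eq] at hX hX'
      have hXne : X.Nonempty := P.nonempty_of_mem_parts hX.1
      have hX'ne : X'.Nonempty := P.nonempty_of_mem_parts hX'.1
      have hfX : f X = (E.idx hXne.choose,
          rowRestr M (BW E k (E.idx hXne.choose)) hXne.choose) := by
        rw [hf]; exact dif_pos hXne
      have hfX' : f X' = (E.idx hX'ne.choose,
          rowRestr M (BW E k (E.idx hX'ne.choose)) hX'ne.choose) := by
        rw [hf]; exact dif_pos hX'ne
      rw [hfX, hfX', Prod.mk.injEq] at hff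
      have hrel : (divSetoid M k E).r hXne.choose hX'ne.choose := by
        refine ⟨hff.1, ?_⟩
        have := hff.2
        rw [hff.1]
        rw [hff.1] at this
        exact this
      obtain ⟨W, hW, hclW⟩ := hEP (class_mem_divPart_parts (M := M) (k := k) E hXne.choose)
      have hx_in : hXne.choose ∈ Finset.univ.filter
          (fun b => (divSetoid M k E).r hXne.choose b) :=
        Finset.mem_filter.mpr ⟨Finset.mem_univ _, (divSetoid M k E).refl _⟩
      have hx'_in : hX'ne.choose ∈ Finset.univ.filter
          (fun b => (divSetoid M k E).r hXne.choose b) :=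
        Finset.mem_filter.mpr ⟨Finset.mem_univ _, hrel⟩
      have h1 : X = W := P.eq_of_mem_parts hX.1 hW hXne.choose_spec (hclW hx_in)
      have h2 : X' = W := P.eq_of_mem_parts hX'.1 hW hX'ne.choose_spec (hclW hx'_in)
      rw [h1, h2]
  have hTcard : T.card ≤ 2 * k := by
    calc T.card ≤ ∑ i' ∈ Finset.Icc q (q + 1),
        (((E.I i').image (rowRestr M (BW E k i'))).image (fun pat => (i', pat))).card :=
          Finset.card_biUnion_le
      _ ≤ ∑ i' ∈ Finset.Icc q (q + 1), (k - 1) := by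
          refine Finset.sum_le_sum (fun i' _ => ?_)
          exact le_trans Finset.card_image_le (diag_card hdiagE i')
      _ ≤ 2 * k := by
          rw [Finset.sum_const, smul_eq_mul, Int.card_Icc]
          have : (q + 1 + 1 - q).toNat = 2 := by omega
          rw [this]
          omega
  exact hcard.trans hTcard

end CountBound


section Endpoints

variable {n k : ℕ} {M : Fin n → Fin n → Bool}

lemma I_card_one (D : SymDiv n) (hp : D.p = n) {j : ℤ} (hj1 : 1 ≤ j) (hj2 : j ≤ (D.p : ℤ)) :
    (D.I j).card = 1 := by
  classical
  set T := Finset.Icc (1 : ℤ) (D.p : ℤ) with hTdef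
  have hTcard : T.card = n := by
    rw [hTdef, Int.card_Icc, hp]
    omega
  have hcover : T.biUnion D.I = Finset.univ := by
    apply Finset.Subset.antisymm (Finset.subset_univ _)
    intro v _
    have hb := D.mem_bounds (D.mem_idx v)
    exact Finset.mem_biUnion.mpr ⟨D.idx v, Finset.mem_Icc.mpr hb, D.mem_idx v⟩
  have hdisj : ∀ x ∈ T, ∀ y ∈ T, x ≠ y → Disjoint (D.I x) (D.I y) := by
    intro x _ y _ hxy
    rw [Finset.disjoint_left]
    intro a hax hay
    exact hxy (D.idx_unique hax hay)
  have hsum : ∑ j ∈ T, (D.I j).card = n := by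
    rw [← Finset.card_biUnion hdisj, hcover, Finset.card_univ, Fintype.card_fin]
  have hone : ∀ j ∈ T, 1 ≤ (D.I j).card := by
    intro j hj
    rw [Finset.mem_Icc] at hj
    exact Finset.card_pos.mpr (D.in_nonempty j hj.1 hj.2)
  by_contra hne
  have hlt : ∑ j ∈ T, (1 : ℕ) < ∑ j ∈ T, (D.I j).card := by
    apply Finset.sum_lt_sum hone
    refine ⟨j, Finset.mem_Icc.mpr ⟨hj1, hj2⟩, ?_⟩
    have := hone j (Finset.mem_Icc.mpr ⟨hj1, hj2⟩)
    omega
  rw [Finset.sum_const, smul_eq_mul, mul_one, hTcard, hsum] at hlt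
  exact lt_irrefl n hlt

lemma divPart_singletons (D : SymDiv n) (hp : D.p = n) :
    ∀ X ∈ (divPart M k D).parts, X.card = 1 := by
  intro X hX
  obtain ⟨a, rfl⟩ := mem_divPart_parts_iff.mp hX
  rw [Finset.card_eq_one]
  refine ⟨a, ?_⟩
  apply Finset.Subset.antisymm
  · intro b hb
    rw [Finset.mem_filter] at hb
    obtain ⟨-, hrel⟩ := hb
    have hbounds := D.mem_bounds (D.mem_idx a)
    have hcard := I_card_one D hp hbounds.1 hbounds.2
    have hmem_a : a ∈ D.I (D.idx a) := D.mem_idx a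
    have hmem_b : b ∈ D.I (D.idx a) := by
      rw [hrel.1]
      exact D.mem_idx b
    rw [Finset.card_eq_one] at hcard
    obtain ⟨c, hc⟩ := hcard
    rw [hc, Finset.mem_singleton] at hmem_a hmem_b
    rw [Finset.mem_singleton, hmem_b, hmem_a]
  · intro b hb
    rw [Finset.mem_singleton] at hb
    subst hb
    exact Finset.mem_filter.mpr ⟨Finset.mem_univ _, (divSetoid M k D).refl _⟩

lemma divPart_top (D : SymDiv n) (hk : 1 ≤ k) (hp : D.p = 1) :
    (divPart M k D).parts = {Finset.univ} := by
  have hn : (Fin n) → True := fun _ => trivial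
  have hidx1 : ∀ r : Fin n, D.idx r = 1 := by
    intro r
    have := D.mem_bounds (D.mem_idx r)
    omega
  have hI1 : ∀ r : Fin n, r ∈ D.I 1 := by
    intro r
    have := D.mem_idx r
    rwa [hidx1 r] at this
  have hBW : ∀ r : Fin n, r ∈ BW D k 1 := by
    intro r
    simp only [BW, Finset.mem_biUnion, Finset.mem_Icc]
    exact ⟨1, by omega, hI1 r⟩
  have hrel : ∀ a b : Fin n, (divSetoid M k D).r a b := by
    intro a b
    refine ⟨(hidx1 a).trans (hidx1 b).symm, ?_⟩
    funext c
    rw [hidx1 a]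
    simp [rowRestr, hBW c]
  obtain ⟨v0, -⟩ := D.in_nonempty 1 le_rfl (by omega)
  ext X
  rw [Finset.mem_singleton, mem_divPart_parts_iff]
  constructor
  · rintro ⟨a, rfl⟩
    apply Finset.Subset.antisymm (Finset.subset_univ _)
    intro b _
    exact Finset.mem_filter.mpr ⟨Finset.mem_univ _, hrel a b⟩
  · rintro rfl
    refine ⟨v0, ?_⟩
    apply Finset.Subset.antisymm
    · intro b _
      exact Finset.mem_filter.mpr ⟨Finset.mem_univ _, hrel v0 b⟩
    · exact Finset.filter_subset _ _

end Endpoints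


section Builder

variable {n k : ℕ} {M : Fin n → Fin n → Bool}

lemma build_seq (hk : 1 ≤ k) (hM : ∀ i j, M i j = M j i) :
    ∀ l : List (SymDiv n), l ≠ [] → l.Chain' DivMerge → (∀ D ∈ l, DiagDiv M D k) →
    ∃ c : List (Finpartition (Finset.univ : Finset (Fin n))),
      c ≠ [] ∧ c.head? = l.head?.map (divPart M k) ∧
      c.getLast? = l.getLast?.map (divPart M k) ∧
      c.Chain' MergeStep ∧ ∀ R ∈ c, matStretch M R ≤ 4 * k ^ 3 := by
  intro l
  induction l with
  | nil => simp
  | cons E rest IH =>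
    intro _ hchain hdiag
    cases rest with
    | nil =>
      refine ⟨[divPart M k E], by simp, by simp, by simp, List.isChain_singleton _, ?_⟩
      intro R hR
      simp only [List.mem_singleton] at hR
      subst hR
      apply stretch_bound hk hM E
      · intro X hX r hr s hs
        exact divPart_rel_of_mem_part hX hr hs
      · intro q
        apply count_bound E (hdiag E (by simp)) _ le_rfl (E.I q) q
        intro r hr
        exact Or.inl (E.idx_eq hr)
    | cons D rest' =>
      have hED : DivMerge E D := (List.isChain_cons_cons.mp hchain).1
      obtain ⟨hp, m, hm1', hm2', hI1, hI2, hI3⟩ := hED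
      obtain ⟨c', hne', hhead', hlast', hchain', hbound'⟩ :=
        IH (by simp) (List.isChain_cons_cons.mp hchain).2
          (fun D' hD' => hdiag D' (List.mem_cons_of_mem E hD'))
      have hle : divPart M k E ≤ divPart M k D := divPart_le_of_merge hI1 hI2 hI3
      obtain ⟨c, hne, hhead, hlast, hchainc, hbetween⟩ :=
        exists_mergeChain (divPart M k E).parts.card (divPart M k E) (divPart M k D) le_rfl hle
      obtain ⟨c0', ct', rfl⟩ := List.exists_cons_of_ne_nil hne'
      have hc0' : c0' = divPart M k D := by
        simp only [List.head?_cons, List.getLast?_cons_cons, List.map_cons,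
          List.head?_cons, Option.map_some, Option.some.injEq] at hhead'
        simpa using hhead'
      have hboundc : ∀ R ∈ c, matStretch M R ≤ 4 * k ^ 3 := by
        intro R hR
        obtain ⟨hER, hRD⟩ := hbetween R hR
        apply stretch_bound hk hM D
        · intro X hX r hr s hs
          obtain ⟨W, hW, hXW⟩ := hRD hX
          exact divPart_rel_of_mem_part hW (hXW hr) (hXW hs)
        · intro q
          apply count_bound E (hdiag E (by simp)) R hER (D.I q) q
          intro r hr
          exact merge_idx_cases hI1 hI2 hI3 hr
      refine ⟨c ++ ct', by simp [hne], ?_, ?_, ?_, ?_⟩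
      · rw [List.head?_append_of_ne_nil _ hne]
        rw [hhead]
        simp
      · cases ct' with
        | nil =>
          rw [List.append_nil, hlast]
          simp only [List.getLast?_singleton, Option.some.injEq] at hlast'
          simp only [List.getLast?_cons_cons]
          rw [← hlast', hc0']
        | cons y ys =>
          rw [List.getLast?_append_of_ne_nil _ (by simp)]
          simp only [List.getLast?_cons_cons] at hlast' ⊢
          exact hlast'
      · apply List.IsChain.append hchainc (List.isChain_cons.mp hchain').2
        intro x hx y hy
        rw [hlast] at hx
        simp only [Option.mem_def, Option.some.injEq] at hx
        subst hx
        have := (List.isChain_cons.mp hchain').1 y hy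
        rwa [hc0'] at this
      · intro R hR
        rcases List.mem_append.mp hR with hR' | hR'
        · exact hboundc R hR'
        · exact hbound' R (List.mem_cons_of_mem c0' hR')

end Builder

/-- If the symmetric 0,1-matrix `M` admits a sequence of symmetric `k`-diagonal divisions,
then `stw(M) ≤ 4k³`. -/
theorem stw_le_of_diag_div_seq (n k : ℕ) (hk : 1 ≤ k)
    (M : Fin n → Fin n → Bool) (hM : ∀ i j, M i j = M j i)
    (h : ∃ l : List (SymDiv n), IsDivSeq l ∧ ∀ D ∈ l, DiagDiv M D k) :
    stwM M ≤ 4 * k ^ 3 := by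
  obtain ⟨l, ⟨⟨Dh, hDh, hDhp⟩, ⟨Dl, hDl, hDlp⟩, hchain⟩, hdiag⟩ := h
  have hlne : l ≠ [] := by
    intro e
    rw [e] at hDh
    simp at hDh
  obtain ⟨c, hcne, hchead, hclast, hcchain, hcbound⟩ := build_seq hk hM l hlne hchain hdiag
  apply Nat.sInf_le
  refine ⟨c, ⟨?_, ?_, hcchain⟩, fun P hP => hcbound P hP⟩
  · refine ⟨divPart M k Dh, ?_, divPart_singletons Dh hDhp⟩
    rw [hchead, hDh]
    rfl
  · refine ⟨divPart M k Dl, ?_, divPart_top Dl hk hDlp⟩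
    rw [hclast, hDl]
    rfl

end StretchPaper
end
end

section
/- For every ordered graph (G,≺) and every integer t ≥ 1, if the overlap graph Ov(G,≺) contains a K_{t,t} subgraph, then there exist disjoint sets X, Y ⊆ E(G), each of size ⌊t/2⌋, such that every edge of X crosses every edge of Y and, for every x ∈ X and y ∈ Y, L(x) ≺ L(y) (i.e., the biclique is clean, with X strictly left of Y). -/
open Finset

noncomputable section
open scoped Classical
set_option linter.unusedSectionVars false
set_option linter.unusedVariables false

namespace StretchPaper

/-! ### Partitions, red graphs, component twin-width and stretch-width of graphs -/

variable {V : Type} [Fintype V] [DecidableEq V]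

/-! ### Symmetric 0,1-matrices: stretch-width and divisions -/

variable {n : ℕ}

/-- Auxiliary: an initial segment (w.r.t. an arbitrary weight function) of any size. -/
lemma exists_initial_seg {β γ : Type} [LinearOrder γ] [DecidableEq β] (f : β → γ)
    (T : Finset β) : ∀ t : ℕ, t ≤ T.card → ∃ U ⊆ T, U.card = t ∧
      ∀ x ∈ U, ∀ y ∈ T \ U, f x ≤ f y := by
  intro t
  induction t with
  | zero => exact fun _ => ⟨∅, Finset.empty_subset T, Finset.card_empty, by simp⟩
  | succ n ih =>
    intro hn
    obtain ⟨U, hUT, hcard, hmin⟩ := ih (by omega)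
    have hne : (T \ U).Nonempty := by
      rw [← Finset.card_pos, Finset.card_sdiff_of_subset hUT, hcard]; omega
    obtain ⟨m, hm, hmle⟩ := Finset.exists_min_image (T \ U) f hne
    refine ⟨insert m U, Finset.insert_subset (Finset.mem_sdiff.1 hm).1 hUT, ?_, ?_⟩
    · rw [Finset.card_insert_of_notMem (Finset.mem_sdiff.1 hm).2, hcard]
    · intro x hx y hy
      have hyU : y ∈ T \ U := by
        rw [Finset.mem_sdiff] at hy ⊢
        exact ⟨hy.1, fun hc => hy.2 (Finset.mem_insert_of_mem hc)⟩
      rcases Finset.mem_insert.1 hx with rfl | hx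
      · exact hmle y hyU
      · exact hmin x hx y hyU

/-- Cross is symmetric. -/
lemma cross_symm {α : Type} [LinearOrder α] {e f : Sym2 α} (h : Cross e f) : Cross f e :=
  Or.symm h

/-- If the overlap graph of `(G, ≤)` contains a `K_{t,t}` subgraph, then it contains a
clean `K_{⌊t/2⌋,⌊t/2⌋}` subgraph: disjoint sets `X, Y` of `⌊t/2⌋` edges each, pairwise
crossing, with `X` strictly left of `Y`. -/
theorem clean_biclique_of_biclique {V : Type} [Fintype V] [LinearOrder V]
    (G : SimpleGraph V) (t : ℕ) (ht : 1 ≤ t) (h : OvHasKtt G t) :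
    ∃ X Y : Finset (Sym2 V), ↑X ⊆ G.edgeSet ∧ ↑Y ⊆ G.edgeSet ∧ Disjoint X Y ∧
      X.card = t / 2 ∧ Y.card = t / 2 ∧
      ∀ x ∈ X, ∀ y ∈ Y, Cross x y ∧ eL x < eL y := by
  classical
  obtain ⟨A, B, hA, hB, hAB, hcA, hcB, hcross⟩ := h
  set k := t / 2 with hk
  obtain ⟨U, hUS, hUcard, hUmin⟩ := exists_initial_seg eL (A ∪ B) t (by
    rw [Finset.card_union_of_disjoint hAB, hcA, hcB]; omega)
  have hpart : (A ∩ U).card + (B ∩ U).card = t := by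
    have h1 : (A ∩ U) ∪ (B ∩ U) = U := by
      rw [← Finset.union_inter_distrib_right]
      exact Finset.inter_eq_right.2 hUS
    have h2 : Disjoint (A ∩ U) (B ∩ U) :=
      hAB.mono Finset.inter_subset_left Finset.inter_subset_left
    rw [← Finset.card_union_of_disjoint h2, h1, hUcard]
  have hAd : (A ∩ U).card + (A \ U).card = t := by
    rw [Finset.card_inter_add_card_sdiff A U, hcA]
  have hBd : (B ∩ U).card + (B \ U).card = t := by
    rw [Finset.card_inter_add_card_sdiff B U, hcB]
  -- comparison of left endpoints across the cut
  have hle : ∀ x ∈ U, ∀ {y}, y ∈ A ∪ B → y ∉ U → eL x ≤ eL y := by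
    intro x hx y hy hyU
    exact hUmin x hx y (Finset.mem_sdiff.2 ⟨hy, hyU⟩)
  rcases le_or_gt k (A ∩ U).card with hcase | hcase
  · -- X from A ∩ U, Y from B \ U
    obtain ⟨X, hXsub, hXcard⟩ := Finset.exists_subset_card_eq hcase
    obtain ⟨Y, hYsub, hYcard⟩ := Finset.exists_subset_card_eq (show k ≤ (B \ U).card by omega)
    have hXA : X ⊆ A := hXsub.trans Finset.inter_subset_left
    have hYB : Y ⊆ B := hYsub.trans Finset.sdiff_subset
    refine ⟨X, Y, (Finset.coe_subset.2 hXA).trans hA, (Finset.coe_subset.2 hYB).trans hB,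
      hAB.mono hXA hYB, hXcard, hYcard, ?_⟩
    intro x hx y hy
    have hc : Cross x y := hcross x (hXA hx) y (hYB hy)
    have hxy : eL x ≤ eL y := by
      have hyBU := Finset.mem_sdiff.1 (hYsub hy)
      exact hle x (Finset.mem_inter.1 (hXsub hx)).2
        (Finset.mem_union_right A hyBU.1) hyBU.2
    refine ⟨hc, ?_⟩
    rcases hc with h1 | h1
    · exact h1.1
    · exact absurd h1.1 (not_lt.2 hxy)
  · -- X from B ∩ U, Y from A \ U
    obtain ⟨X, hXsub, hXcard⟩ := Finset.exists_subset_card_eq (show k ≤ (B ∩ U).card by omega)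
    obtain ⟨Y, hYsub, hYcard⟩ := Finset.exists_subset_card_eq (show k ≤ (A \ U).card by omega)
    have hXB : X ⊆ B := hXsub.trans Finset.inter_subset_left
    have hYA : Y ⊆ A := hYsub.trans Finset.sdiff_subset
    refine ⟨X, Y, (Finset.coe_subset.2 hXB).trans hB, (Finset.coe_subset.2 hYA).trans hA,
      (hAB.symm).mono hXB hYA, hXcard, hYcard, ?_⟩
    intro x hx y hy
    have hc : Cross x y := cross_symm (hcross y (hYA hy) x (hXB hx))
    have hxy : eL x ≤ eL y := by
      have hyAU := Finset.mem_sdiff.1 (hYsub hy)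
      exact hle x (Finset.mem_inter.1 (hXsub hx)).2
        (Finset.mem_union_left B hyAU.1) hyAU.2
    refine ⟨hc, ?_⟩
    rcases hc with h1 | h1
    · exact h1.1
    · exact absurd h1.1 (not_lt.2 hxy)

end StretchPaper
end
end

section
/- Let (G,≺) be an ordered graph and e = uv an edge of G with u ≺ v. Then every path in G that starts at a vertex strictly between u and v (in ≺) and ends at a vertex w with w ≺ u or v ≺ w contains u, or contains v, or contains an edge crossing e. -/
open Finset

noncomputable section
open scoped Classical
set_option linter.unusedSectionVars false
set_option linter.unusedVariables false

namespace StretchPaper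

/-! ### Partitions, red graphs, component twin-width and stretch-width of graphs -/

variable {V : Type} [Fintype V] [DecidableEq V]

/-! ### Symmetric 0,1-matrices: stretch-width and divisions -/

variable {n : ℕ}

lemma walk_meets_aux {V : Type} [Fintype V] [LinearOrder V]
    (G : SimpleGraph V) (u v : V) (hlt : u < v) :
    ∀ {a b : V} (p : G.Walk a b), u < a → a < v → (b < u ∨ v < b) →
    u ∈ p.support ∨ v ∈ p.support ∨ ∃ f ∈ p.edges, Cross f s(u, v) := by
  intro a b p
  induction p with
  | nil =>
    intro h1 h2 h3
    rcases h3 with h3 | h3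
    · exact absurd (h1.trans h3) (lt_irrefl _)
    · exact absurd (h2.trans h3) (lt_irrefl _)
  | @cons x c b hadj q ih =>
    intro h1 h2 h3
    by_cases hcu : c = u
    · subst hcu
      left
      simp [SimpleGraph.Walk.support_cons]
    by_cases hcv : c = v
    · subst hcv
      right; left
      simp [SimpleGraph.Walk.support_cons]
    rcases lt_trichotomy c u with hc | hc | hc
    · right; right
      refine ⟨s(x, c), by simp, ?_⟩
      left
      constructor
      · simpa [eL, min_def, Sym2.lift_mk] using
          (show min x c < min u v by
            rw [min_eq_right (hc.trans h1).le, min_eq_left hlt.le]; exact hc)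
      constructor
      · simpa [eL, eR, min_def, max_def, Sym2.lift_mk] using
          (show min u v < max x c by
            rw [min_eq_left hlt.le, max_eq_left (hc.le.trans h1.le)]; exact h1)
      · simpa [eR, max_def, Sym2.lift_mk] using
          (show max x c < max u v by
            rw [max_eq_left (hc.le.trans h1.le), max_eq_right hlt.le]; exact h2)
    · exact absurd hc hcu
    rcases lt_trichotomy c v with hc' | hc' | hc'
    · -- c strictly inside, recurse
      rcases ih hc hc' h3 with h | h | ⟨f, hf, hcr⟩
      · left; simp [SimpleGraph.Walk.support_cons, h]
      · right; left; simp [SimpleGraph.Walk.support_cons, h]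
      · right; right; exact ⟨f, by simp [hf], hcr⟩
    · exact absurd hc' hcv
    · right; right
      refine ⟨s(x, c), by simp, ?_⟩
      right
      constructor
      · simpa [eL, min_def, Sym2.lift_mk] using
          (show min u v < min x c by
            rw [min_eq_left hlt.le, min_eq_left (h2.le.trans hc'.le)]; exact h1)
      constructor
      · simpa [eL, eR, min_def, max_def, Sym2.lift_mk] using
          (show min x c < max u v by
            rw [max_eq_right hlt.le, min_eq_left (h2.le.trans hc'.le)]; exact h2)
      · simpa [eR, max_def, Sym2.lift_mk] using
          (show max u v < max x c by
            rw [max_eq_right hlt.le, max_eq_right (h2.le.trans hc'.le)]; exact hc')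

/-- Every path from a vertex strictly between the endpoints of an edge `uv` (with `u < v`)
to a vertex outside `[u, v]` contains `u`, or `v`, or an edge crossing `uv`. -/
theorem path_meets_endpoint_or_crossing {V : Type} [Fintype V] [LinearOrder V]
    (G : SimpleGraph V) (u v : V) (huv : G.Adj u v) (hlt : u < v)
    (a b : V) (ha : u < a ∧ a < v) (hb : b < u ∨ v < b)
    (p : G.Walk a b) (hp : p.IsPath) :
    u ∈ p.support ∨ v ∈ p.support ∨ ∃ f ∈ p.edges, Cross f s(u, v) :=
  walk_meets_aux G u v hlt p ha.1 ha.2 hb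

end StretchPaper
end
end

section
/- There is a constant c such that the following holds. Let t ≥ 1 be an integer, let (G,≺) be an ordered graph whose overlap graph Ov(G,≺) has no K_{t,t} subgraph, let v be a vertex of G, and let S be a maximum rainbow over v. Then there exist a vertex x ∈ S^i ∪ {v} and a set U ⊆ V(G) with |U| ≤ c·t²·log₂(ℓ(S,≺)+2) such that every path in G from a vertex w with w ≺ x to a vertex w' with x ≺ w' contains a vertex of U. -/
open Finset

noncomputable section
open scoped Classical
set_option linter.unusedSectionVars false
set_option linter.unusedVariables false

namespace StretchPaper

/-! ### Partitions, red graphs, component twin-width and stretch-width of graphs -/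

variable {V : Type} [Fintype V] [DecidableEq V]

/-! ### Symmetric 0,1-matrices: stretch-width and divisions -/

variable {n : ℕ}

/-! ### Auxiliary lemmas for the separation main lemma -/

section SepAux

variable {α : Type} [LinearOrder α]

lemma eL_mk (a b : α) : eL s(a, b) = min a b := rfl

lemma eR_mk (a b : α) : eR s(a, b) = max a b := rfl

lemma eL_mk_of_lt {a b : α} (h : a < b) : eL s(a, b) = a := min_eq_left h.le

lemma eR_mk_of_lt {a b : α} (h : a < b) : eR s(a, b) = b := max_eq_right h.le

/-- Every `Sym2` element is the unordered pair of its smaller and larger endpoint. -/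
lemma sym2_eq_mk_eL_eR (e : Sym2 α) : e = s(eL e, eR e) := by
  induction e using Sym2.inductionOn with
  | hf a b =>
    rcases le_total a b with h | h
    · rw [eL_mk, eR_mk, min_eq_left h, max_eq_right h]
    · rw [eL_mk, eR_mk, min_eq_right h, max_eq_left h, Sym2.eq_swap]

variable {W : Type} [Fintype W] [LinearOrder W]

/-- Walk covering: if `x ∈ U` and every edge strictly over `x` has an endpoint in `U`,
then every walk from the left of `x` to the right of `x` meets `U`. -/
lemma walk_hits (G : SimpleGraph W) (x : W) (U : Finset W)
    (hxU : x ∈ U) (hcov : ∀ u w : W, G.Adj u w → u < x → x < w → u ∈ U ∨ w ∈ U) :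
    ∀ {a b : W} (q : G.Walk a b), a < x → x < b → ∃ z ∈ U, z ∈ q.support := by
  intro a b q
  induction q with
  | nil =>
    intro h1 h2
    exact absurd (h1.trans h2) (lt_irrefl _)
  | @cons u c b hadj q ih =>
    intro h1 h2
    rcases lt_trichotomy c x with hc | hc | hc
    · obtain ⟨z, hzU, hzs⟩ := ih hc h2
      exact ⟨z, hzU, by simp [SimpleGraph.Walk.support_cons, hzs]⟩
    · exact ⟨x, hxU, by simp [SimpleGraph.Walk.support_cons, ← hc,
        SimpleGraph.Walk.start_mem_support]⟩
    · rcases hcov u c hadj h1 hc with h | h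
      · exact ⟨u, h, by simp [SimpleGraph.Walk.support_cons]⟩
      · exact ⟨c, h, by simp [SimpleGraph.Walk.support_cons,
          SimpleGraph.Walk.start_mem_support]⟩

/-- A prefix of a finset in the ordering has the expected cardinality. -/
lemma card_filter_le_orderIso (S : Finset W) {k : ℕ} (hk : k < S.card) :
    (S.filter (fun y => y ≤ ((S.orderIsoOfFin rfl) ⟨k, hk⟩ : W))).card = k + 1 := by
  classical
  set iso := S.orderIsoOfFin (rfl : S.card = S.card) with hiso
  set mid : W := (iso ⟨k, hk⟩ : W) with hmid
  have hcard : (Finset.Iic (⟨k, hk⟩ : Fin S.card)).card = k + 1 := by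
    exact Fin.card_Iic (⟨k, hk⟩ : Fin S.card)
  rw [← hcard]
  refine Finset.card_bij'
    (i := fun (y : W) (hy : y ∈ S.filter (fun y => y ≤ mid)) =>
      iso.symm ⟨y, (Finset.mem_filter.mp hy).1⟩)
    (j := fun (i : Fin S.card) (_ : i ∈ Finset.Iic (⟨k, hk⟩ : Fin S.card)) => (iso i : W))
    ?_ ?_ ?_ ?_
  · intro y hy
    have h2 := (Finset.mem_filter.mp hy).2
    have h3 : (⟨y, (Finset.mem_filter.mp hy).1⟩ : {x // x ∈ S}) ≤ iso ⟨k, hk⟩ := h2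
    exact Finset.mem_Iic.mpr (iso.symm_apply_le.mpr h3)
  · intro i hi
    have hi' : i ≤ (⟨k, hk⟩ : Fin S.card) := Finset.mem_Iic.mp hi
    refine Finset.mem_filter.mpr ⟨(iso i).2, ?_⟩
    have : iso i ≤ iso ⟨k, hk⟩ := iso.le_iff_le.mpr hi'
    exact this
  · intro y hy
    simp
  · intro i hi
    simp

end SepAux

section SepMain

variable {V : Type} [Fintype V] [LinearOrder V]

/-- Core recursion: inside a convex window `W` of size at most `2^m`, there is a point `x`
and a small set `F` of edges such that every edge strictly over `x` either strictly spans
the whole window `W` or belongs to `F`. -/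
lemma window_recursion (G : SimpleGraph V) (t : ℕ) (hK : ¬ OvHasKtt G t) :
    ∀ (m : ℕ) (W : Finset V) (hne : W.Nonempty),
      (∀ y : V, W.min' hne ≤ y → y ≤ W.max' hne → y ∈ W) →
      W.card ≤ 2 ^ m →
      ∃ x ∈ W, ∃ F : Finset (Sym2 V), F.card ≤ m * t ∧
        ∀ e ∈ G.edgeSet, eL e < x → x < eR e →
          (eL e < W.min' hne ∧ W.max' hne < eR e) ∨ e ∈ F := by
  classical
  intro m
  induction m with
  | zero =>
    intro W hne hconv hcard
    obtain ⟨a, ha⟩ := Finset.card_eq_one.mp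
      (le_antisymm (by simpa using hcard) (Finset.one_le_card.mpr hne))
    subst ha
    refine ⟨a, Finset.mem_singleton_self a, ∅, by simp, ?_⟩
    intro e he h1 h2
    exact Or.inl ⟨by simpa using h1, by simpa using h2⟩
  | succ n IH =>
    intro W hne hconv hcard
    by_cases hsmall : W.card ≤ 2 ^ n
    · obtain ⟨x, hx, F, hFc, hF⟩ := IH W hne hconv hsmall
      exact ⟨x, hx, F, hFc.trans (Nat.mul_le_mul_right t (Nat.le_succ n)), hF⟩
    · have h2n : 2 ^ n < W.card := lt_of_not_ge hsmall
      have h1le : 1 ≤ 2 ^ n := Nat.one_le_two_pow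
      have hidx : 2 ^ n - 1 < W.card := by omega
      set iso := W.orderIsoOfFin (rfl : W.card = W.card) with hiso
      set mid : V := (iso ⟨2 ^ n - 1, hidx⟩ : V) with hmiddef
      have hmidW : mid ∈ W := (iso ⟨2 ^ n - 1, hidx⟩).2
      set α := W.min' hne with hα
      set β := W.max' hne with hβ
      set Lf : Finset V := W.filter (fun y => y ≤ mid) with hLf
      set Rf : Finset V := W.filter (fun y => ¬ y ≤ mid) with hRf
      have hLcard : Lf.card = 2 ^ n := by
        have := card_filter_le_orderIso W hidx
        rw [hLf, hmiddef, hiso]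
        rw [this]
        omega
      have hsumcard : Lf.card + Rf.card = W.card :=
        Finset.card_filter_add_card_filter_not (p := fun y => y ≤ mid)
      have hRcard : Rf.card ≤ 2 ^ n := by
        have hpow : 2 ^ (n + 1) = 2 ^ n + 2 ^ n := by ring
        omega
      have hLne : Lf.Nonempty := ⟨mid, Finset.mem_filter.mpr ⟨hmidW, le_refl mid⟩⟩
      -- the top element of W is strictly greater than mid
      have hidxtop : W.card - 1 < W.card := by omega
      set top : V := (iso ⟨W.card - 1, hidxtop⟩ : V) with htopdef
      have htopW : top ∈ W := (iso ⟨W.card - 1, hidxtop⟩).2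
      have hmidtop : mid < top := by
        have hlt : (⟨2 ^ n - 1, hidx⟩ : Fin W.card) < ⟨W.card - 1, hidxtop⟩ := by
          simp only [Fin.mk_lt_mk]
          omega
        have := iso.lt_iff_lt.mpr hlt
        exact_mod_cast this
      have hRne : Rf.Nonempty := ⟨top, Finset.mem_filter.mpr ⟨htopW, not_le.mpr hmidtop⟩⟩
      -- min/max of the halves
      have hminL : Lf.min' hLne = α := by
        have hαL : α ∈ Lf := Finset.mem_filter.mpr ⟨W.min'_mem hne,
          W.min'_le mid hmidW⟩
        refine le_antisymm (Lf.min'_le α hαL) ?_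
        exact W.min'_le _ (Finset.mem_filter.mp (Lf.min'_mem hLne)).1
      have hmaxL : Lf.max' hLne = mid := by
        refine le_antisymm (Finset.max'_le _ _ _ (fun y hy =>
          (Finset.mem_filter.mp hy).2)) ?_
        exact Lf.le_max' mid (Finset.mem_filter.mpr ⟨hmidW, le_refl mid⟩)
      have hβR : β ∈ Rf := by
        refine Finset.mem_filter.mpr ⟨W.max'_mem hne, not_le.mpr ?_⟩
        exact lt_of_lt_of_le hmidtop (W.le_max' top htopW)
      have hmaxR : Rf.max' hRne = β := by
        refine le_antisymm ?_ (Rf.le_max' β hβR)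
        exact W.le_max' _ (Finset.mem_filter.mp (Rf.max'_mem hRne)).1
      have hmidminR : mid < Rf.min' hRne :=
        not_le.mp (Finset.mem_filter.mp (Rf.min'_mem hRne)).2
      -- the two families of jumping edges
      set EL : Finset (Sym2 V) := Finset.univ.filter
        (fun e => e ∈ G.edgeSet ∧ eL e < α ∧ mid < eR e ∧ eR e ≤ β) with hEL
      set ER : Finset (Sym2 V) := Finset.univ.filter
        (fun e => e ∈ G.edgeSet ∧ α ≤ eL e ∧ eL e ≤ mid ∧ β < eR e) with hER
      have hnotboth : ¬ (t ≤ EL.card ∧ t ≤ ER.card) := by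
        rintro ⟨hL, hR⟩
        obtain ⟨A, hAsub, hAcard⟩ := Finset.exists_subset_card_eq hL
        obtain ⟨B, hBsub, hBcard⟩ := Finset.exists_subset_card_eq hR
        apply hK
        refine ⟨A, B, ?_, ?_, ?_, hAcard, hBcard, ?_⟩
        · intro e he
          have := hAsub (by exact_mod_cast he)
          exact (Finset.mem_filter.mp this).2.1
        · intro e he
          have := hBsub (by exact_mod_cast he)
          exact (Finset.mem_filter.mp this).2.1
        · rw [Finset.disjoint_left]
          intro e heA heB
          have h1 := (Finset.mem_filter.mp (hAsub heA)).2.2.1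
          have h2 := (Finset.mem_filter.mp (hBsub heB)).2.2.1
          exact absurd (lt_of_lt_of_le h1 h2) (lt_irrefl _)
        · intro e heA f hfB
          have h1 := (Finset.mem_filter.mp (hAsub heA)).2
          have h2 := (Finset.mem_filter.mp (hBsub hfB)).2
          exact Or.inl ⟨lt_of_lt_of_le h1.2.1 h2.2.1,
            lt_of_le_of_lt h2.2.2.1 h1.2.2.1,
            lt_of_le_of_lt h1.2.2.2 h2.2.2.2⟩
      by_cases hELsmall : EL.card < t
      · -- recurse into the left half
        have hconvL : ∀ y : V, Lf.min' hLne ≤ y → y ≤ Lf.max' hLne → y ∈ Lf := by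
          intro y h1 h2
          rw [hminL] at h1
          rw [hmaxL] at h2
          refine Finset.mem_filter.mpr ⟨hconv y h1 (h2.trans (W.le_max' mid hmidW)), h2⟩
        obtain ⟨x, hx, F, hFc, hF⟩ := IH Lf hLne hconvL (le_of_eq hLcard)
        refine ⟨x, (Finset.mem_filter.mp hx).1, F ∪ EL, ?_, ?_⟩
        · calc (F ∪ EL).card ≤ F.card + EL.card := Finset.card_union_le F EL
            _ ≤ n * t + t := Nat.add_le_add hFc (Nat.le_of_lt_succ (Nat.lt_succ_of_lt hELsmall))
            _ = (n + 1) * t := by ring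
        · intro e he h1 h2
          rcases hF e he h1 h2 with ⟨ha, hb⟩ | hmem
          · rw [hminL] at ha
            rw [hmaxL] at hb
            by_cases hre : eR e ≤ β
            · exact Or.inr (Finset.mem_union_right F (Finset.mem_filter.mpr
                ⟨Finset.mem_univ e, he, ha, hb, hre⟩))
            · exact Or.inl ⟨ha, not_le.mp hre⟩
          · exact Or.inr (Finset.mem_union_left EL hmem)
      · -- EL is large, so ER is small; recurse into the right half
        have hERsmall : ER.card < t := by
          by_contra hc
          exact hnotboth ⟨le_of_not_gt hELsmall, le_of_not_gt hc⟩
        have hconvR : ∀ y : V, Rf.min' hRne ≤ y → y ≤ Rf.max' hRne → y ∈ Rf := by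
          intro y h1 h2
          rw [hmaxR] at h2
          have hyW : y ∈ W := hconv y
            ((W.min'_le _ (Finset.mem_filter.mp (Rf.min'_mem hRne)).1).trans h1) h2
          exact Finset.mem_filter.mpr ⟨hyW, not_le.mpr (lt_of_lt_of_le hmidminR h1)⟩
        obtain ⟨x, hx, F, hFc, hF⟩ := IH Rf hRne hconvR hRcard
        refine ⟨x, (Finset.mem_filter.mp hx).1, F ∪ ER, ?_, ?_⟩
        · calc (F ∪ ER).card ≤ F.card + ER.card := Finset.card_union_le F ER
            _ ≤ n * t + t := Nat.add_le_add hFc (Nat.le_of_lt_succ (Nat.lt_succ_of_lt hERsmall))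
            _ = (n + 1) * t := by ring
        · intro e he h1 h2
          rcases hF e he h1 h2 with ⟨ha, hb⟩ | hmem
          · rw [hmaxR] at hb
            by_cases hle : eL e < α
            · exact Or.inl ⟨hle, hb⟩
            · have hleW : eL e ∈ W := by
                apply hconv (eL e) (not_lt.mp hle)
                have : Rf.min' hRne ≤ β := W.le_max' _
                  (Finset.mem_filter.mp (Rf.min'_mem hRne)).1
                exact (le_of_lt ha).trans this
              have hnotR : eL e ∉ Rf := by
                intro hcon
                exact absurd (Rf.min'_le _ hcon) (not_le.mpr ha)
              have hlemid : eL e ≤ mid := by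
                by_contra hcon
                exact hnotR (Finset.mem_filter.mpr ⟨hleW, hcon⟩)
              exact Or.inr (Finset.mem_union_right F (Finset.mem_filter.mpr
                ⟨Finset.mem_univ e, he, not_lt.mp hle, hlemid, hb⟩))
          · exact Or.inr (Finset.mem_union_left ER hmem)

end SepMain

/-- Separation main lemma: there is a constant `c` such that, whenever the overlap graph of
`(G, ≤)` has no `K_{t,t}` subgraph and `S` is a maximum rainbow over `v`, some vertex
`x ∈ S^i ∪ {v}` can be separated from both sides by a set `U` of at most
`c·t²·log₂(ℓ(S)+2)` vertices. -/
theorem separation_main_lemma :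
    ∃ c : ℝ, 0 < c ∧ ∀ t : ℕ, 1 ≤ t →
      ∀ (V : Type) [Fintype V] [LinearOrder V] (G : SimpleGraph V),
        ¬ OvHasKtt G t →
        ∀ (v : V) (S : Finset (Sym2 V)), IsMaxRainbowOver G S v →
          ∃ (x : V) (U : Finset V),
            (x ∈ S.biUnion edgeInterior ∨ x = v) ∧
            (U.card : ℝ) ≤ c * (t : ℝ) ^ 2 * Real.logb 2 ((lenSup S : ℝ) + 2) ∧
            ∀ a b : V, a < x → x < b → ∀ q : G.Walk a b, q.IsPath →
              ∃ z ∈ U, z ∈ q.support := by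
  classical
  refine ⟨10, by norm_num, ?_⟩
  intro t ht V _ _ G hK v S hS
  obtain ⟨⟨⟨hSedge, hSnest⟩, hSover⟩, hSmax⟩ := hS
  have ht' : (1 : ℝ) ≤ (t : ℝ) := by exact_mod_cast ht
  have hlogge : (1 : ℝ) ≤ Real.logb 2 ((lenSup S : ℝ) + 2) := by
    have h2 : (0 : ℝ) < 2 := by norm_num
    have hle : (2 : ℝ) ≤ (lenSup S : ℝ) + 2 := by
      have := Nat.cast_nonneg (α := ℝ) (lenSup S)
      linarith
    calc (1 : ℝ) = Real.logb 2 2 := (Real.logb_self_eq_one one_lt_two).symm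
      _ ≤ Real.logb 2 ((lenSup S : ℝ) + 2) :=
        Real.logb_le_logb_of_le one_lt_two h2 hle
  rcases Finset.eq_empty_or_nonempty S with hS0 | hSne
  · -- the maximum rainbow is empty: no edge is strictly over v
    refine ⟨v, {v}, Or.inr rfl, ?_, ?_⟩
    · have : (({v} : Finset V).card : ℝ) = 1 := by simp
      rw [this]
      nlinarith [hlogge, ht', sq_nonneg ((t : ℝ) - 1)]
    · intro a b hav hvb q hq
      refine walk_hits G v {v} (Finset.mem_singleton_self v) ?_ q hav hvb
      intro u w hadj hu hw
      exfalso
      have hrb : IsRainbowOver G {s(u, w)} v := by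
        refine ⟨⟨?_, ?_⟩, ?_⟩
        · intro e he
          have : e = s(u, w) := by simpa using he
          rw [this]
          exact (SimpleGraph.mem_edgeSet G).mpr hadj
        · intro e he f hf
          have he' : e = s(u, w) := by simpa using he
          have hf' : f = s(u, w) := by simpa using hf
          rw [he', hf']
          exact Or.inl (subset_refl _)
        · intro e he
          have he' : e = s(u, w) := by simpa using he
          rw [he', eL_mk_of_lt (hu.trans hw), eR_mk_of_lt (hu.trans hw)]
          exact ⟨hu, hw⟩
      have := hSmax {s(u, w)} hrb
      rw [hS0] at this
      simp at this
  · -- the maximum rainbow is nonempty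
    obtain ⟨e₁, he₁S, hmaxint⟩ := S.exists_max_image (fun e => (edgeInterior e).card) hSne
    have he₁edge : e₁ ∈ G.edgeSet := hSedge (Finset.mem_coe.mpr he₁S)
    obtain ⟨hov₁l, hov₁r⟩ := hSover e₁ he₁S
    have hsub : ∀ f ∈ S, edgeInterior f ⊆ edgeInterior e₁ := by
      intro f hf
      rcases hSnest f hf e₁ he₁S with h | h
      · exact h
      · rw [Finset.eq_of_subset_of_card_le h (hmaxint f hf)]
    set W₀ : Finset V := edgeInterior e₁ with hW₀
    have hvW : v ∈ W₀ := by
      rw [hW₀, edgeInterior]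
      exact Finset.mem_filter.mpr ⟨Finset.mem_univ v, hov₁l, hov₁r⟩
    have hne₀ : W₀.Nonempty := ⟨v, hvW⟩
    have hmemW₀ : ∀ y : V, y ∈ W₀ ↔ (eL e₁ < y ∧ y < eR e₁) := by
      intro y
      rw [hW₀, edgeInterior, Finset.mem_filter]
      simp
    have hconv₀ : ∀ y : V, W₀.min' hne₀ ≤ y → y ≤ W₀.max' hne₀ → y ∈ W₀ := by
      intro y h1 h2
      have hmin := (hmemW₀ _).mp (W₀.min'_mem hne₀)
      have hmax := (hmemW₀ _).mp (W₀.max'_mem hne₀)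
      exact (hmemW₀ y).mpr ⟨lt_of_lt_of_le hmin.1 h1, lt_of_le_of_lt h2 hmax.2⟩
    set m := Nat.clog 2 (lenSup S + 2) with hm
    have hcard₀ : W₀.card ≤ 2 ^ m := by
      have hEq : edgeLen e₁ = (Finset.univ.filter
          (fun y : V => eL e₁ < y ∧ y ≤ eR e₁)).card := rfl
      have h1 : W₀.card ≤ edgeLen e₁ := by
        rw [hEq]
        apply Finset.card_le_card
        intro y hy
        have := (hmemW₀ y).mp hy
        exact Finset.mem_filter.mpr ⟨Finset.mem_univ y, this.1, this.2.le⟩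
      have h2 : edgeLen e₁ ≤ lenSup S := Finset.le_sup he₁S
      have h3 : lenSup S + 2 ≤ 2 ^ m := Nat.le_pow_clog one_lt_two _
      omega
    obtain ⟨x, hxW, F, hFcard, hFmain⟩ := window_recursion G t hK m W₀ hne₀ hconv₀ hcard₀
    -- any edge strictly spanning W₀ is e₁ itself, by maximality of S
    have hspan : ∀ e ∈ G.edgeSet, eL e < W₀.min' hne₀ → W₀.max' hne₀ < eR e → e = e₁ := by
      intro e he h1 h2
      have hminW := (hmemW₀ _).mp (W₀.min'_mem hne₀)
      have hmaxW := (hmemW₀ _).mp (W₀.max'_mem hne₀)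
      have hvmin : W₀.min' hne₀ ≤ v := W₀.min'_le v hvW
      have hvmax : v ≤ W₀.max' hne₀ := W₀.le_max' v hvW
      -- eL e ≤ eL e₁
      have hLL : eL e ≤ eL e₁ := by
        by_contra hc
        push_neg at hc
        have : eL e ∈ W₀ := (hmemW₀ _).mpr ⟨hc, (h1.trans_le hvmin).trans hov₁r⟩
        exact absurd (W₀.min'_le _ this) (not_le.mpr h1)
      have hRR : eR e₁ ≤ eR e := by
        by_contra hc
        push_neg at hc
        have : eR e ∈ W₀ := (hmemW₀ _).mpr
          ⟨hov₁l.trans_le (hvmax.trans h2.le), hc⟩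
        exact absurd (W₀.le_max' _ this) (not_le.mpr h2)
      have hWsube : W₀ ⊆ edgeInterior e := by
        intro y hy
        have hy' := (hmemW₀ y).mp hy
        rw [edgeInterior]
        exact Finset.mem_filter.mpr ⟨Finset.mem_univ y,
          lt_of_le_of_lt hLL hy'.1, lt_of_lt_of_le hy'.2 hRR⟩
      by_cases heS : e ∈ S
      · -- then the interiors coincide, forcing e = e₁
        have hint : edgeInterior e = edgeInterior e₁ :=
          le_antisymm (hsub e heS) hWsube
        have hmemInt : ∀ y : V, y ∈ edgeInterior e ↔ (eL e < y ∧ y < eR e) := by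
          intro y
          rw [edgeInterior, Finset.mem_filter]
          simp
        have heL : eL e = eL e₁ := by
          rcases lt_or_eq_of_le hLL with h | h
          · exfalso
            have : eL e₁ ∈ edgeInterior e := by
              refine (hmemInt _).mpr ⟨h, ?_⟩
              exact hov₁l.trans (lt_of_lt_of_le hov₁r hRR)
            rw [hint] at this
            exact absurd ((hmemW₀ _).mp this).1 (lt_irrefl _)
          · exact h
        have heR : eR e = eR e₁ := by
          rcases lt_or_eq_of_le hRR with h | h
          · exfalso
            have : eR e₁ ∈ edgeInterior e := by
              refine (hmemInt _).mpr ⟨?_, h⟩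
              exact lt_of_le_of_lt hLL (hov₁l.trans hov₁r)
            rw [hint] at this
            exact absurd ((hmemW₀ _).mp this).2 (lt_irrefl _)
          · exact h.symm
        calc e = s(eL e, eR e) := sym2_eq_mk_eL_eR e
          _ = s(eL e₁, eR e₁) := by rw [heL, heR]
          _ = e₁ := (sym2_eq_mk_eL_eR e₁).symm
      · -- otherwise S could be extended, contradicting maximality
        exfalso
        have hrb : IsRainbowOver G (insert e S) v := by
          refine ⟨⟨?_, ?_⟩, ?_⟩
          · intro f hf
            rcases Finset.mem_insert.mp (by exact_mod_cast hf) with h | h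
            · rw [h]; exact he
            · exact hSedge (by exact_mod_cast h)
          · intro f hf g hg
            rcases Finset.mem_insert.mp hf with hf' | hf' <;>
              rcases Finset.mem_insert.mp hg with hg' | hg'
            · rw [hf', hg']; exact Or.inl (subset_refl _)
            · rw [hf']
              exact Or.inr ((hsub g hg').trans hWsube)
            · rw [hg']
              exact Or.inl ((hsub f hf').trans hWsube)
            · exact hSnest f hf' g hg'
          · intro f hf
            rcases Finset.mem_insert.mp hf with hf' | hf'
            · rw [hf']
              exact ⟨(h1.trans_le hvmin), lt_of_le_of_lt hvmax h2⟩
            · exact hSover f hf'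
        have hle := hSmax (insert e S) hrb
        rw [Finset.card_insert_of_notMem heS] at hle
        omega
    -- assemble the separator
    set U : Finset V := insert x (insert (eL e₁)
      (F.biUnion (fun e => {eL e, eR e}))) with hU
    have hxU : x ∈ U := Finset.mem_insert_self _ _
    refine ⟨x, U, Or.inl (Finset.mem_biUnion.mpr ⟨e₁, he₁S, hxW⟩), ?_, ?_⟩
    · -- cardinality bound
      have hUcard : U.card ≤ 2 + 2 * F.card := by
        have h1 : (F.biUnion (fun e => {eL e, eR e})).card ≤ 2 * F.card := by
          calc (F.biUnion (fun e => {eL e, eR e})).card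
              ≤ ∑ e ∈ F, ({eL e, eR e} : Finset V).card := Finset.card_biUnion_le
            _ ≤ ∑ e ∈ F, 2 := Finset.sum_le_sum (fun e _ =>
                Finset.card_insert_le _ _ |>.trans (by simp))
            _ = 2 * F.card := by rw [Finset.sum_const, smul_eq_mul, mul_comm]
        calc U.card ≤ (insert (eL e₁) (F.biUnion (fun e => {eL e, eR e}))).card + 1 :=
              Finset.card_insert_le _ _
          _ ≤ ((F.biUnion (fun e => {eL e, eR e})).card + 1) + 1 :=
              Nat.add_le_add_right (Finset.card_insert_le _ _) 1
          _ ≤ 2 + 2 * F.card := by omega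
      have hmreal : (m : ℝ) ≤ Real.logb 2 ((lenSup S : ℝ) + 2) + 1 := by
        rcases Nat.eq_zero_or_pos m with hm0 | hmpos
        · rw [hm0]
          push_cast
          linarith [hlogge]
        · have hpred : 2 ^ (m - 1) < lenSup S + 2 := by
            have := Nat.pow_pred_clog_lt_self one_lt_two
              (x := lenSup S + 2) (by omega)
            simpa [hm, Nat.pred_eq_sub_one] using this
          have hreal : ((2 : ℝ)) ^ (m - 1) < (lenSup S : ℝ) + 2 := by
            exact_mod_cast hpred
          have hlogb : ((m - 1 : ℕ) : ℝ) < Real.logb 2 ((lenSup S : ℝ) + 2) := by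
            calc ((m - 1 : ℕ) : ℝ) = Real.logb 2 ((2 : ℝ) ^ (m - 1)) := by
                  rw [Real.logb_pow, Real.logb_self_eq_one one_lt_two, mul_one]
              _ < Real.logb 2 ((lenSup S : ℝ) + 2) :=
                  Real.logb_lt_logb one_lt_two (by positivity) hreal
          have hcast : ((m - 1 : ℕ) : ℝ) = (m : ℝ) - 1 := by
            rw [Nat.cast_sub hmpos]
            norm_num
          rw [hcast] at hlogb
          linarith
      have hF2 : (F.card : ℝ) ≤ (m : ℝ) * t := by exact_mod_cast hFcard
      have hUr : (U.card : ℝ) ≤ 2 + 2 * ((m : ℝ) * t) := by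
        have : (U.card : ℝ) ≤ 2 + 2 * (F.card : ℝ) := by exact_mod_cast hUcard
        linarith
      set Lg := Real.logb 2 ((lenSup S : ℝ) + 2) with hLg
      calc (U.card : ℝ) ≤ 2 + 2 * ((m : ℝ) * t) := hUr
        _ ≤ 2 + 2 * ((Lg + 1) * t) := by
            have := mul_le_mul_of_nonneg_right hmreal (by positivity : (0:ℝ) ≤ (t:ℝ))
            linarith
        _ ≤ 10 * (t : ℝ) ^ 2 * Lg := by
            have htsq : (t : ℝ) ≤ (t : ℝ) ^ 2 := by nlinarith [ht']
            have hA : (t : ℝ) * Lg ≤ (t : ℝ) ^ 2 * Lg :=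
              mul_le_mul_of_nonneg_right htsq (by linarith [hlogge])
            have hB0 : (t : ℝ) ^ 2 * 1 ≤ (t : ℝ) ^ 2 * Lg :=
              mul_le_mul_of_nonneg_left hlogge (by positivity)
            have hB : (t : ℝ) ≤ (t : ℝ) ^ 2 * Lg := by nlinarith [htsq, hB0]
            have hC : (1 : ℝ) ≤ (t : ℝ) ^ 2 * Lg := by nlinarith [ht', hB0]
            nlinarith [hA, hB, hC]
    · -- the covering property
      intro a b hax hxb q hq
      refine walk_hits G x U hxU ?_ q hax hxb
      intro u w hadj hu hw
      have huw : u < w := hu.trans hw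
      have he : s(u, w) ∈ G.edgeSet := (SimpleGraph.mem_edgeSet G).mpr hadj
      have heL : eL s(u, w) = u := eL_mk_of_lt huw
      have heR : eR s(u, w) = w := eR_mk_of_lt huw
      rcases hFmain s(u, w) he (by rw [heL]; exact hu) (by rw [heR]; exact hw)
        with ⟨ha, hb⟩ | hmem
      · -- the edge spans W₀, so it is e₁ and u = eL e₁
        have hsp := hspan s(u, w) he ha hb
        left
        have hue : u = eL e₁ := by rw [hsp] at heL; exact heL.symm
        rw [hue, hU]
        exact Finset.mem_insert_of_mem (Finset.mem_insert_self _ _)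
      · left
        rw [hU]
        refine Finset.mem_insert_of_mem (Finset.mem_insert_of_mem ?_)
        rw [Finset.mem_biUnion]
        exact ⟨s(u, w), hmem, Finset.mem_insert.mpr (Or.inl heL.symm)⟩

end StretchPaper
end
end
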